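/- arXiv:2206.02752 — 3 statements merged into one kernel-verified Lean document; each statement's English description precedes it below -/
import Mathlib

section
/- Fix r with 0<r<1 and let λ∈ℂ. Regard f(z)=z−λ as an element of ℋ²(A_r). If r<|λ|<1, then f is not cyclic in ℋ²(A_r) (hence not free outer). If |λ|≤r, then f is cyclic in ℋ²(A_r) but not free outer. -/
noncomputable section

namespace Annulus

open Complex Metric
open scoped Classical

/-- The annulus `A_r = {z : r < |z| < 1}`. -/
def ARset (r : ℝ) : Set ℂ := {z : ℂ | r < ‖z‖ ∧ ‖z‖ < 1}

/-- The weight `r^(2n)` for `n < 0`, `1` for `n ≥ 0`, appearing in the norm of `ℋ²(A_r)`. -/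
def wgt (r : ℝ) (n : ℤ) : ℝ := if n < 0 then r ^ (2 * n) else 1

/-- The coefficient square norm `∑_{n<0} r^(2n) |c n|² + ∑_{n≥0} |c n|²`. -/
def coeffNormSq (r : ℝ) (c : ℤ → ℂ) : ℝ := ∑' n : ℤ, wgt r n * ‖c n‖ ^ 2

/-- `f` is represented on `A_r` by the Laurent series with coefficients `c`,
and this series has finite `ℋ²(A_r)` norm. -/
def HasCoeff (r : ℝ) (f : ℂ → ℂ) (c : ℤ → ℂ) : Prop :=
  (Summable fun n : ℤ => wgt r n * ‖c n‖ ^ 2) ∧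
    ∀ z ∈ ARset r, f z = ∑' n : ℤ, c n * z ^ n

/-- Membership in `ℋ²(A_r)` (for a function regarded via its restriction to `A_r`). -/
def MemH2A (r : ℝ) (f : ℂ → ℂ) : Prop := ∃ c, HasCoeff r f c

/-- The Laurent coefficients of an element of `ℋ²(A_r)` (uniquely determined). -/
def coeffA (r : ℝ) (f : ℂ → ℂ) : ℤ → ℂ := if h : MemH2A r f then h.choose else 0

/-- The norm of `ℋ²(A_r)`. -/
def normA (r : ℝ) (f : ℂ → ℂ) : ℝ := Real.sqrt (coeffNormSq r (coeffA r f))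

/-- The inner product of `ℋ²(A_r)` (linear in the first argument). -/
def innerA (r : ℝ) (f g : ℂ → ℂ) : ℂ :=
  ∑' n : ℤ, (wgt r n : ℂ) * coeffA r f n * (starRingEnd ℂ) (coeffA r g n)

/-- `φ` is a multiplier of `ℋ²(A_r)`. -/
def IsMult (r : ℝ) (φ : ℂ → ℂ) : Prop := ∀ f, MemH2A r f → MemH2A r (φ * f)

/-- The multiplier norm (operator norm of `M_φ` on `ℋ²(A_r)`). -/
def multNorm (r : ℝ) (φ : ℂ → ℂ) : ℝ :=
  sInf {C : ℝ | 0 ≤ C ∧ ∀ f, MemH2A r f → normA r (φ * f) ≤ C * normA r f}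

/-- `φ` is a subinner multiplier of `ℋ²(A_r)`: multiplier norm one and norm attained
at some nonzero `h ∈ ℋ²(A_r)`. -/
def Subinner (r : ℝ) (φ : ℂ → ℂ) : Prop :=
  IsMult r φ ∧ multNorm r φ = 1 ∧
    ∃ h, MemH2A r h ∧ (∃ z ∈ ARset r, h z ≠ 0) ∧ normA r (φ * h) = normA r h

/-- `g ∈ ℰ_f`: `⟨φ g, g⟩ = ⟨φ f, f⟩` for every multiplier `φ` of `ℋ²(A_r)`. -/
def SameP (r : ℝ) (f g : ℂ → ℂ) : Prop :=
  ∀ φ, IsMult r φ → innerA r (φ * g) g = innerA r (φ * f) f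

/-- `f` is free outer in `ℋ²(A_r)`:  `|f(z)| = sup {|g(z)| : g ∈ ℰ_f}` for all `z ∈ A_r`. -/
def FreeOuter (r : ℝ) (f : ℂ → ℂ) : Prop :=
  MemH2A r f ∧ ∀ z ∈ ARset r,
    ‖f z‖ = sSup {t : ℝ | ∃ g, MemH2A r g ∧ SameP r f g ∧ t = ‖g z‖}

/-- `f` is cyclic in `ℋ²(A_r)`: multiplier multiples of `f` are dense. -/
def Cyclic (r : ℝ) (f : ℂ → ℂ) : Prop :=
  MemH2A r f ∧ ∀ g, MemH2A r g → ∀ ε > 0, ∃ φ, IsMult r φ ∧ normA r (φ * f - g) < ε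

/-! Hardy space of the unit disk. -/

/-- `f` is represented on `𝔻` by the Taylor series with coefficients `a`, square-summable. -/
def HasCoeffD (f : ℂ → ℂ) (a : ℕ → ℂ) : Prop :=
  (Summable fun n : ℕ => ‖a n‖ ^ 2) ∧
    ∀ z : ℂ, ‖z‖ < 1 → f z = ∑' n : ℕ, a n * z ^ n

/-- Membership in the Hardy space `H²(𝔻)`. -/
def MemH2D (f : ℂ → ℂ) : Prop := ∃ a, HasCoeffD f a

/-- The Taylor coefficients of an element of `H²(𝔻)`. -/
def coeffD (f : ℂ → ℂ) : ℕ → ℂ := if h : MemH2D f then h.choose else 0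

/-- The `H²(𝔻)` norm. -/
def normD (f : ℂ → ℂ) : ℝ := Real.sqrt (∑' n : ℕ, ‖coeffD f n‖ ^ 2)

/-- The `H²(𝔻)` inner product (linear in the first argument). -/
def innerD (f g : ℂ → ℂ) : ℂ := ∑' n : ℕ, coeffD f n * (starRingEnd ℂ) (coeffD g n)

/-- `φ` is bounded and holomorphic on the unit disk. -/
def BddHol (φ : ℂ → ℂ) : Prop :=
  DifferentiableOn ℂ φ (ball (0 : ℂ) 1) ∧
    ∃ M : ℝ, ∀ z ∈ ball (0 : ℂ) 1, ‖φ z‖ ≤ M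

/-- The supremum norm of `H^∞(𝔻)`. -/
def hinfNorm (φ : ℂ → ℂ) : ℝ := sSup {t : ℝ | ∃ z ∈ ball (0 : ℂ) 1, t = ‖φ z‖}

/-- `φ` is `H²(𝔻)`-inner: a bounded holomorphic function on `𝔻` with
`‖φ f‖ = ‖f‖` for every `f ∈ H²(𝔻)`. -/
def InnerD (φ : ℂ → ℂ) : Prop :=
  BddHol φ ∧ ∀ f, MemH2D f → MemH2D (φ * f) ∧ normD (φ * f) = normD f

/-- `f` is `H²(𝔻)`-outer: polynomial multiples of `f` are dense in `H²(𝔻)`. -/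
def OuterD (f : ℂ → ℂ) : Prop :=
  MemH2D f ∧ ∀ g, MemH2D g → ∀ ε > 0, ∃ p : Polynomial ℂ,
    normD (fun z => p.eval z * f z - g z) < ε

/-! Hardy space of the disk `𝔻₀ = {|z| > r}` at infinity. -/

/-- Membership in `H²(𝔻₀)`: `f(z) = h(r/z)` with `h ∈ H²(𝔻)`. -/
def MemH2D0 (r : ℝ) (f : ℂ → ℂ) : Prop :=
  ∃ h, MemH2D h ∧ ∀ z : ℂ, r < ‖z‖ → f z = h (r / z)

/-- The `H²(𝔻₀)` norm: `‖f‖ = ‖h‖_{H²(𝔻)}` where `f(z) = h(r/z)`. -/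
def normD0 (r : ℝ) (f : ℂ → ℂ) : ℝ := if h : MemH2D0 r f then normD h.choose else 0

/-- `φ` is bounded and holomorphic on `𝔻₀` (including at `∞`):
`φ(z) = ψ(r/z)` for a bounded holomorphic `ψ` on `𝔻`. -/
def BddHol0 (r : ℝ) (φ : ℂ → ℂ) : Prop :=
  ∃ ψ, BddHol ψ ∧ ∀ z : ℂ, r < ‖z‖ → φ z = ψ (r / z)

/-- The supremum norm of `H^∞(𝔻₀)`. -/
def hinfNorm0 (r : ℝ) (φ : ℂ → ℂ) : ℝ :=
  sSup {t : ℝ | ∃ z : ℂ, r < ‖z‖ ∧ t = ‖φ z‖}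

/-- `φ` is `H²(𝔻₀)`-inner: `φ(z) = ψ(r/z)` for an `H²(𝔻)`-inner `ψ`. -/
def InnerD0 (r : ℝ) (φ : ℂ → ℂ) : Prop :=
  ∃ ψ, InnerD ψ ∧ ∀ z : ℂ, r < ‖z‖ → φ z = ψ (r / z)

/-- `f` is `H²(𝔻₀)`-outer: `f(z) = h(r/z)` for an `H²(𝔻)`-outer `h`. -/
def OuterD0 (r : ℝ) (f : ℂ → ℂ) : Prop :=
  ∃ h, OuterD h ∧ ∀ z : ℂ, r < ‖z‖ → f z = h (r / z)

/-! Multipliers between spaces. -/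

/-- `φ ∈ Mult(H²(𝔻), ℋ²(A_r))`. -/
def IsMultDtoA (r : ℝ) (φ : ℂ → ℂ) : Prop := ∀ f, MemH2D f → MemH2A r (φ * f)

/-- The norm of `Mult(H²(𝔻), ℋ²(A_r))`. -/
def multNormDtoA (r : ℝ) (φ : ℂ → ℂ) : ℝ :=
  sInf {C : ℝ | 0 ≤ C ∧ ∀ f, MemH2D f → normA r (φ * f) ≤ C * normD f}

/-- `φ ∈ Mult(H²(𝔻₀), ℋ²(A_r))`. -/
def IsMultD0toA (r : ℝ) (φ : ℂ → ℂ) : Prop := ∀ f, MemH2D0 r f → MemH2A r (φ * f)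

/-- The norm of `Mult(H²(𝔻₀), ℋ²(A_r))`. -/
def multNormD0toA (r : ℝ) (φ : ℂ → ℂ) : ℝ :=
  sInf {C : ℝ | 0 ≤ C ∧ ∀ f, MemH2D0 r f → normA r (φ * f) ≤ C * normD0 r f}

end Annulus
namespace Annulus

variable {r : ℝ}

lemma wgt_eq_zpow (hr0 : 0 < r) (n : ℤ) : wgt r n = r ^ (if n < 0 then 2 * n else 0) := by
  unfold wgt; split_ifs <;> simp

lemma wgt_pos (hr0 : 0 < r) (n : ℤ) : 0 < wgt r n := by
  rw [wgt_eq_zpow hr0]; positivity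

def swgt (r : ℝ) (n : ℤ) : ℝ := if n < 0 then r ^ n else 1

lemma swgt_pos (hr0 : 0 < r) (n : ℤ) : 0 < swgt r n := by
  unfold swgt; split <;> positivity

lemma swgt_sq (hr0 : 0 < r) (n : ℤ) : swgt r n ^ 2 = wgt r n := by
  unfold swgt wgt; split_ifs
  · rw [← zpow_natCast (r ^ n) 2, ← zpow_mul]; ring_nf
  · simp

lemma wgt_shift (hr0 : 0 < r) (hr1 : r < 1) (m k : ℤ) :
    wgt r (m + k) ≤ r ^ (-(2 * |k|)) * wgt r m := by
  have hrne : r ≠ 0 := ne_of_gt hr0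
  rw [wgt_eq_zpow hr0, wgt_eq_zpow hr0, ← zpow_add₀ hrne]
  apply zpow_le_zpow_right_of_le_one₀ hr0 hr1.le
  have h1 := neg_abs_le k
  have h2 := le_abs_self k
  split_ifs <;> omega

end Annulus
namespace Annulus

variable {r : ℝ}

/-- geometric-type summability of `|z|^n / swgt r n` over `ℤ`. -/
lemma summable_v (hr0 : 0 < r) {z : ℂ} (hz : z ∈ ARset r) :
    Summable fun n : ℤ => norm z ^ n / swgt r n := by
  obtain ⟨hz1, hz2⟩ := hz
  have hz0 : 0 < norm z := lt_trans hr0 hz1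
  apply Summable.of_nat_of_neg
  · have : (fun n : ℕ => norm z ^ (n : ℤ) / swgt r (n : ℤ))
        = fun n : ℕ => norm z ^ n := by
      funext n
      rw [swgt, if_neg (by omega), zpow_natCast]
      simp
    rw [this]
    exact summable_geometric_of_lt_one (by positivity) hz2
  · have : (fun n : ℕ => norm z ^ (-n : ℤ) / swgt r (-n : ℤ))
        = fun n : ℕ => (r / norm z) ^ n := by
      funext n
      rcases Nat.eq_zero_or_pos n with h | h
      · subst h; simp [swgt]
      · rw [swgt, if_pos (by omega)]
        rw [← div_zpow, zpow_neg, zpow_natCast, ← inv_pow, inv_div]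
    rw [this]
    exact summable_geometric_of_lt_one (by positivity) (by rw [div_lt_one hz0]; exact hz1)

lemma abs_coeff_le (hr0 : 0 < r) {c : ℤ → ℂ}
    (hc : Summable fun n : ℤ => wgt r n * norm (c n) ^ 2) (n : ℤ) :
    norm (c n) ≤ Real.sqrt (∑' n : ℤ, wgt r n * norm (c n) ^ 2) / swgt r n := by
  have hs := swgt_pos hr0 n
  rw [le_div_iff₀ hs]
  apply Real.le_sqrt_of_sq_le
  calc (norm (c n) * swgt r n) ^ 2 = wgt r n * norm (c n) ^ 2 := by
        rw [mul_pow, swgt_sq hr0]; ring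
    _ ≤ _ := Summable.le_tsum hc n (fun j _ => mul_nonneg (wgt_pos hr0 j).le (by positivity))

lemma summable_abs_coeff (hr0 : 0 < r) {c : ℤ → ℂ}
    (hc : Summable fun n : ℤ => wgt r n * norm (c n) ^ 2) {z : ℂ} (hz : z ∈ ARset r) :
    Summable fun n : ℤ => norm (c n) * norm z ^ n := by
  have hz0 : 0 < norm z := lt_trans hr0 hz.1
  apply Summable.of_nonneg_of_le (fun n => by positivity)
      (fun n => ?_) (((summable_v hr0 hz).mul_left
        (Real.sqrt (∑' n : ℤ, wgt r n * norm (c n) ^ 2))))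
  calc norm (c n) * norm z ^ n
      ≤ (Real.sqrt (∑' n : ℤ, wgt r n * norm (c n) ^ 2) / swgt r n) * norm z ^ n :=
        mul_le_mul_of_nonneg_right (abs_coeff_le hr0 hc n) (by positivity)
    _ = _ := by ring

lemma summable_coeff (hr0 : 0 < r) {c : ℤ → ℂ}
    (hc : Summable fun n : ℤ => wgt r n * norm (c n) ^ 2) {z : ℂ} (hz : z ∈ ARset r) :
    Summable fun n : ℤ => c n * z ^ n := by
  rw [← summable_norm_iff]
  have : (fun n : ℤ => ‖c n * z ^ n‖) = fun n : ℤ => norm (c n) * norm z ^ n := by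
    funext n; simp [norm_zpow]
  rw [this]
  exact summable_abs_coeff hr0 hc hz

/-- Point evaluation bound. -/
lemma point_bound (hr0 : 0 < r) {f : ℂ → ℂ} {c : ℤ → ℂ} (hc : HasCoeff r f c)
    {z : ℂ} (hz : z ∈ ARset r) :
    norm (f z) ≤ Real.sqrt (coeffNormSq r c) * ∑' n : ℤ, norm z ^ n / swgt r n := by
  rw [hc.2 z hz]
  calc norm (∑' n : ℤ, c n * z ^ n) ≤ ∑' n : ℤ, ‖c n * z ^ n‖ :=
        norm_tsum_le_tsum_norm (by
          have : (fun n : ℤ => ‖c n * z ^ n‖)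
              = fun n : ℤ => norm (c n) * norm z ^ n := by
            funext n; simp [norm_zpow]
          rw [this]; exact summable_abs_coeff hr0 hc.1 hz)
    _ ≤ ∑' n : ℤ, Real.sqrt (coeffNormSq r c) * (norm z ^ n / swgt r n) := by
        apply Summable.tsum_le_tsum _ _ ((summable_v hr0 hz).mul_left _)
        · intro n
          simp only [norm_mul, norm_zpow]
          calc ‖c n‖ * ‖z‖ ^ n ≤ (Real.sqrt (coeffNormSq r c) / swgt r n) * norm z ^ n :=
              mul_le_mul_of_nonneg_right (abs_coeff_le hr0 hc.1 n) (by positivity)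
            _ = _ := by rw [coeffNormSq]; ring
        · have : (fun n : ℤ => ‖c n * z ^ n‖)
              = fun n : ℤ => norm (c n) * norm z ^ n := by
            funext n; simp [norm_zpow]
          rw [this]; exact summable_abs_coeff hr0 hc.1 hz
    _ = _ := tsum_mul_left

end Annulus
namespace Annulus

variable {r : ℝ}

open MeasureTheory in
lemma coeff_unique_zero (hr0 : 0 < r) (hr1 : r < 1) {c : ℤ → ℂ}
    (hsum : ∀ z ∈ ARset r, Summable fun n : ℤ => c n * z ^ n)
    (hzero : ∀ z ∈ ARset r, ∑' n : ℤ, c n * z ^ n = 0) : c = 0 := by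
  have hπ := Real.pi_pos
  set ρ : ℝ := (r + 1) / 2 with hρ
  have hρr : r < ρ := by rw [hρ]; linarith
  have hρ1 : ρ < 1 := by rw [hρ]; linarith
  have hρ0 : 0 < ρ := lt_trans hr0 hρr
  have habs : ∀ θ : ℝ, norm ((ρ : ℂ) * Complex.exp (Complex.I * θ)) = ρ := by
    intro θ
    rw [norm_mul, Complex.norm_real, Real.norm_eq_abs, abs_of_pos hρ0, mul_comm Complex.I,
      Complex.norm_exp_ofReal_mul_I, mul_one]
  have hmem : ∀ θ : ℝ, ((ρ : ℂ) * Complex.exp (Complex.I * θ)) ∈ ARset r := by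
    intro θ; constructor <;> rw [habs θ]
    exacts [hρr, hρ1]
  funext m
  set G : ℤ → ℝ → ℂ :=
    fun n θ => c n * (ρ : ℂ) ^ n * Complex.exp (((n - m : ℤ) : ℂ) * Complex.I * θ) with hG
  have key : ∀ θ : ℝ, ∑' n : ℤ, G n θ = 0 := by
    intro θ
    have h0 := hzero _ (hmem θ)
    have heq : (fun n : ℤ => G n θ) = fun n : ℤ =>
        (c n * ((ρ : ℂ) * Complex.exp (Complex.I * θ)) ^ n)
          * Complex.exp (-(m : ℂ) * Complex.I * θ) := by
      funext n
      rw [mul_zpow, ← Complex.exp_int_mul, hG]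
      simp only
      have hexp : Complex.exp ((n:ℂ) * (Complex.I * ↑θ)) * Complex.exp (-(m:ℂ) * Complex.I * ↑θ)
          = Complex.exp (((n - m : ℤ):ℂ) * Complex.I * ↑θ) := by
        rw [← Complex.exp_add]; congr 1; push_cast; ring
      rw [mul_assoc (c n), mul_assoc (c n), mul_assoc ((ρ:ℂ) ^ n), hexp]
    rw [heq, tsum_mul_right, h0, zero_mul]
  have hGcont : ∀ n : ℤ, Continuous (G n) :=
    fun n => continuous_const.mul (Complex.continuous_exp.comp
      (continuous_const.mul Complex.continuous_ofReal))
  have hGnorm : ∀ (n : ℤ) (θ : ℝ), ‖G n θ‖ = norm (c n) * ρ ^ n := by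
    intro n θ
    rw [hG]
    simp only [norm_mul]
    have h1 : ‖Complex.exp (((n - m : ℤ) : ℂ) * Complex.I * θ)‖ = 1 := by
      rw [Complex.norm_exp]
      simp
    have h2 : ‖(ρ : ℂ) ^ n‖ = ρ ^ n := by
      rw [norm_zpow, Complex.norm_real, Real.norm_eq_abs, abs_of_pos hρ0]
    rw [h1, h2, mul_one]
  set μ := volume.restrict (Set.Ioc (0:ℝ) (2*Real.pi)) with hμ
  have hsummable : Summable (fun n : ℤ => norm (c n) * ρ ^ n) := by
    have := summable_norm_iff.mpr (hsum _ (hmem 0))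
    have heq : (fun n : ℤ => ‖c n * ((ρ:ℂ) * Complex.exp (Complex.I * (0:ℝ))) ^ n‖)
        = fun n : ℤ => norm (c n) * ρ ^ n := by
      funext n
      rw [norm_mul, norm_zpow, habs 0]
    rwa [heq] at this
  have hswap : ∫ θ, (∑' n : ℤ, G n θ) ∂μ = ∑' n : ℤ, ∫ θ, G n θ ∂μ := by
    apply integral_tsum (fun n => (hGcont n).aestronglyMeasurable)
    have hval : ∀ n : ℤ, ∫⁻ θ, ‖G n θ‖ₑ ∂μ
        = ENNReal.ofReal (norm (c n) * ρ ^ n * (2*Real.pi)) := by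
      intro n
      have heq : (fun θ : ℝ => (‖G n θ‖ₑ : ENNReal))
          = fun _ : ℝ => ENNReal.ofReal (norm (c n) * ρ ^ n) := by
        funext θ
        rw [← ofReal_norm, hGnorm]
      rw [heq, lintegral_const, hμ, Measure.restrict_apply_univ, Real.volume_Ioc,
        ← ENNReal.ofReal_mul (by positivity)]
      congr 1; ring
    rw [tsum_congr hval,
      ← ENNReal.ofReal_tsum_of_nonneg (fun n => by positivity) (hsummable.mul_right _)]
    exact ENNReal.ofReal_ne_top
  have hint : ∀ n : ℤ, ∫ θ, G n θ ∂μ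
      = if n = m then c m * (ρ:ℂ)^m * (2*Real.pi) else 0 := by
    intro n
    have hle : (0:ℝ) ≤ 2*Real.pi := by positivity
    have hμint : ∫ θ, G n θ ∂μ = ∫ θ in (0:ℝ)..(2*Real.pi), G n θ :=
      (intervalIntegral.integral_of_le hle).symm
    rw [hμint, hG]
    simp only
    rw [intervalIntegral.integral_const_mul]
    by_cases h : n = m
    · subst h
      simp only [sub_self, Int.cast_zero, zero_mul, Complex.exp_zero, if_pos rfl]
      rw [intervalIntegral.integral_const, sub_zero, Complex.real_smul, mul_one]
      norm_cast
    · have hC : ((n - m : ℤ) : ℂ) * Complex.I ≠ 0 := by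
        apply mul_ne_zero _ Complex.I_ne_zero
        exact_mod_cast sub_ne_zero.mpr h
      rw [if_neg h, integral_exp_mul_complex hC]
      have h1 : Complex.exp (((n - m : ℤ) : ℂ) * Complex.I * (2*Real.pi : ℝ)) = 1 := by
        rw [show (((n - m : ℤ) : ℂ)) * Complex.I * ((2*Real.pi : ℝ) : ℂ)
            = ((n - m : ℤ) : ℂ) * (2 * (Real.pi : ℂ) * Complex.I) by push_cast; ring]
        exact Complex.exp_int_mul_two_pi_mul_I (n - m)
      rw [h1]
      simp
  have h2 : ∑' n : ℤ, ∫ θ, G n θ ∂μ = c m * (ρ:ℂ)^m * (2*Real.pi) := by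
    rw [tsum_congr hint, tsum_eq_single m (fun b hb => if_neg hb), if_pos rfl]
  have h3 : ∫ θ, (∑' n : ℤ, G n θ) ∂μ = 0 := by
    simp only [key, integral_zero]
  rw [h3, h2, mul_assoc] at hswap
  have hρz : ((ρ:ℂ))^m ≠ 0 := zpow_ne_zero m (by exact_mod_cast ne_of_gt hρ0)
  simp only [Pi.zero_apply]
  rcases mul_eq_zero.mp hswap.symm with h | h
  · exact h
  · exfalso
    have hπc : (Real.pi : ℂ) ≠ 0 := by exact_mod_cast Real.pi_ne_zero
    exact mul_ne_zero hρz (by simp [hπc]) h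

end Annulus
namespace Annulus

variable {r : ℝ}

lemma hasCoeff_unique (hr0 : 0 < r) (hr1 : r < 1) {f : ℂ → ℂ} {c d : ℤ → ℂ}
    (hc : HasCoeff r f c)
    (hds : ∀ z ∈ ARset r, Summable fun n : ℤ => d n * z ^ n)
    (hdr : ∀ z ∈ ARset r, f z = ∑' n : ℤ, d n * z ^ n) : c = d := by
  have h : (fun n => c n - d n) = 0 := by
    apply coeff_unique_zero hr0 hr1
    · intro z hz
      have := (summable_coeff hr0 hc.1 hz).sub (hds z hz)
      apply this.congr
      intro n; ring
    · intro z hz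
      have hts : ∑' n : ℤ, (c n - d n) * z ^ n
          = (∑' n : ℤ, c n * z ^ n) - ∑' n : ℤ, d n * z ^ n := by
        rw [← Summable.tsum_sub (summable_coeff hr0 hc.1 hz) (hds z hz)]
        apply tsum_congr; intro n; ring
      rw [hts, ← hc.2 z hz, ← hdr z hz, sub_self]
  funext n
  have := congrFun h n
  simp only [Pi.zero_apply] at this
  exact sub_eq_zero.mp this

lemma coeffA_spec {f : ℂ → ℂ} (h : MemH2A r f) : HasCoeff r f (coeffA r f) := by
  rw [coeffA, dif_pos h]
  exact h.choose_spec

lemma coeffA_eq (hr0 : 0 < r) (hr1 : r < 1) {f : ℂ → ℂ} {c : ℤ → ℂ}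
    (hc : HasCoeff r f c) : coeffA r f = c :=
  hasCoeff_unique hr0 hr1 (coeffA_spec ⟨c, hc⟩)
    (fun z hz => summable_coeff hr0 hc.1 hz) hc.2

lemma normA_eq (hr0 : 0 < r) (hr1 : r < 1) {f : ℂ → ℂ} {c : ℤ → ℂ}
    (hc : HasCoeff r f c) : normA r f = Real.sqrt (coeffNormSq r c) := by
  rw [normA, coeffA_eq hr0 hr1 hc]

lemma summable_wgt_add (hr0 : 0 < r) {c d : ℤ → ℂ}
    (hc : Summable fun n : ℤ => wgt r n * norm (c n) ^ 2)
    (hd : Summable fun n : ℤ => wgt r n * norm (d n) ^ 2) :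
    Summable fun n : ℤ => wgt r n * norm (c n + d n) ^ 2 := by
  apply Summable.of_nonneg_of_le
      (fun n => mul_nonneg (wgt_pos hr0 n).le (by positivity))
      (fun n => ?_) ((hc.mul_left 2).add (hd.mul_left 2))
  have h1 : norm (c n + d n) ≤ norm (c n) + norm (d n) :=
    norm_add_le _ _
  have h2 := wgt_pos hr0 n
  have h3 : norm (c n + d n) ^ 2 ≤ (norm (c n) + norm (d n)) ^ 2 :=
    pow_le_pow_left₀ (norm_nonneg _) h1 2
  have h4 : (norm (c n) + norm (d n)) ^ 2
      ≤ 2 * norm (c n) ^ 2 + 2 * norm (d n) ^ 2 := by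
    nlinarith [sq_nonneg (norm (c n) - norm (d n))]
  calc wgt r n * norm (c n + d n) ^ 2
      ≤ wgt r n * (2 * norm (c n) ^ 2 + 2 * norm (d n) ^ 2) :=
        mul_le_mul_of_nonneg_left (h3.trans h4) h2.le
    _ = 2 * (wgt r n * norm (c n) ^ 2) + 2 * (wgt r n * norm (d n) ^ 2) := by ring

lemma hasCoeff_add (hr0 : 0 < r) {f g : ℂ → ℂ} {c d : ℤ → ℂ}
    (hc : HasCoeff r f c) (hd : HasCoeff r g d) :
    HasCoeff r (fun z => f z + g z) (fun n => c n + d n) := by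
  refine ⟨summable_wgt_add hr0 hc.1 hd.1, fun z hz => ?_⟩
  show f z + g z = ∑' n : ℤ, (c n + d n) * z ^ n
  rw [hc.2 z hz, hd.2 z hz, ← Summable.tsum_add (summable_coeff hr0 hc.1 hz) (summable_coeff hr0 hd.1 hz)]
  apply tsum_congr; intro n; ring

lemma hasCoeff_sub (hr0 : 0 < r) {f g : ℂ → ℂ} {c d : ℤ → ℂ}
    (hc : HasCoeff r f c) (hd : HasCoeff r g d) :
    HasCoeff r (fun z => f z - g z) (fun n => c n - d n) := by
  have hneg : HasCoeff r (fun z => -(g z)) (fun n => -(d n)) := by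
    refine ⟨?_, fun z hz => ?_⟩
    · apply hd.1.congr; intro n; simp
    · show -(g z) = ∑' n : ℤ, -(d n) * z ^ n
      rw [hd.2 z hz, ← tsum_neg]
      apply tsum_congr; intro n; ring
  have := hasCoeff_add hr0 hc hneg
  refine ⟨this.1.congr fun n => by simp [sub_eq_add_neg], fun z hz => ?_⟩
  have h2 := this.2 z hz
  show f z - g z = ∑' n : ℤ, (c n - d n) * z ^ n
  simp only [sub_eq_add_neg]
  exact h2

lemma hasCoeff_zpow_smul_mul (hr0 : 0 < r) (hr1 : r < 1) (b : ℂ) (k : ℤ) {f : ℂ → ℂ}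
    {c : ℤ → ℂ} (hc : HasCoeff r f c) :
    HasCoeff r (fun z => b * z ^ k * f z) (fun n => b * c (n - k)) := by
  have hshift : Summable fun n : ℤ => wgt r (n - k) * norm (c (n - k)) ^ 2 := by
    have h := ((Equiv.subRight k).summable_iff
      (f := fun n : ℤ => wgt r n * norm (c n) ^ 2)).mpr hc.1
    exact h
  constructor
  · simp only
    apply Summable.of_nonneg_of_le
        (fun n => mul_nonneg (wgt_pos hr0 n).le (by positivity))
        (fun n => ?_)
        (hshift.mul_left (norm b ^ 2 * r ^ (-(2 * |k|))))
    have h1 : wgt r n ≤ r ^ (-(2 * |k|)) * wgt r (n - k) := by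
      have h := wgt_shift hr0 hr1 (n - k) k
      rwa [sub_add_cancel] at h
    calc wgt r n * norm (b * c (n - k)) ^ 2
        = norm b ^ 2 * (wgt r n * norm (c (n - k)) ^ 2) := by
          rw [norm_mul]; ring
      _ ≤ norm b ^ 2 * ((r ^ (-(2 * |k|)) * wgt r (n - k)) * norm (c (n - k)) ^ 2) := by
          apply mul_le_mul_of_nonneg_left _ (by positivity)
          apply mul_le_mul_of_nonneg_right h1 (by positivity)
      _ = norm b ^ 2 * r ^ (-(2 * |k|)) * (wgt r (n - k) * norm (c (n - k)) ^ 2) := by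
          ring
  · intro z hz
    have hz0 : z ≠ 0 := by
      intro h
      rw [h] at hz
      have := hz.1
      simp at this
      linarith
    show b * z ^ k * f z = ∑' n : ℤ, b * c (n - k) * z ^ n
    calc b * z ^ k * f z = ∑' n : ℤ, b * c n * z ^ (n + k) := by
          rw [hc.2 z hz, ← tsum_mul_left]
          apply tsum_congr; intro n
          rw [zpow_add₀ hz0]; ring
      _ = ∑' m : ℤ, b * c (m - k) * z ^ m := by
          have h := (Equiv.addRight k).tsum_eq (fun m : ℤ => b * c (m - k) * z ^ m)
          simp only [Equiv.coe_addRight, add_sub_cancel_right] at h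
          exact h

lemma hasCoeff_finsupp (b : ℤ → ℂ) (t : Finset ℤ) (hb : ∀ m ∉ t, b m = 0) :
    HasCoeff r (fun z => ∑ k ∈ t, b k * z ^ k) b :=
  ⟨summable_of_ne_finset_zero (s := t) (fun m hm => by rw [hb m hm]; simp),
   fun z _ => (tsum_eq_sum (fun m hm => by rw [hb m hm]; simp)).symm⟩

lemma hasCoeff_one : HasCoeff r (fun _ : ℂ => (1 : ℂ)) (fun n => if n = 0 then 1 else 0) := by
  constructor
  · apply summable_of_ne_finset_zero (s := ({0} : Finset ℤ))
    intro m hm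
    simp only [Finset.mem_singleton] at hm
    simp [hm]
  · intro z hz
    rw [tsum_eq_single 0 (fun n hn => by simp [hn])]
    simp

end Annulus
namespace Annulus

variable {r : ℝ}

lemma coeffNormSq_nonneg (hr0 : 0 < r) (c : ℤ → ℂ) : 0 ≤ coeffNormSq r c :=
  tsum_nonneg fun n => mul_nonneg (wgt_pos hr0 n).le (by positivity)

lemma tsum_cs {A B : ℤ → ℝ} (hA0 : ∀ n, 0 ≤ A n) (hB0 : ∀ n, 0 ≤ B n)
    (hA : Summable fun n => A n ^ 2) (hB : Summable fun n => B n ^ 2) :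
    ∑' n : ℤ, A n * B n ≤ Real.sqrt (∑' n : ℤ, A n ^ 2) * Real.sqrt (∑' n : ℤ, B n ^ 2) := by
  have hAB : Summable fun n : ℤ => A n * B n := by
    apply Summable.of_nonneg_of_le (fun n => mul_nonneg (hA0 n) (hB0 n)) (fun n => ?_)
      ((hA.add hB).mul_left (1/2))
    nlinarith [sq_nonneg (A n - B n)]
  apply Summable.tsum_le_of_sum_le hAB
  intro s
  have h1 : (∑ n ∈ s, A n * B n) ^ 2 ≤ (∑ n ∈ s, A n ^ 2) * (∑ n ∈ s, B n ^ 2) :=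
    Finset.sum_mul_sq_le_sq_mul_sq s A B
  have h2 : ∑ n ∈ s, A n ^ 2 ≤ ∑' n : ℤ, A n ^ 2 := Summable.sum_le_tsum s (fun i _ => sq_nonneg _) hA
  have h3 : ∑ n ∈ s, B n ^ 2 ≤ ∑' n : ℤ, B n ^ 2 := Summable.sum_le_tsum s (fun i _ => sq_nonneg _) hB
  calc ∑ n ∈ s, A n * B n ≤ Real.sqrt ((∑ n ∈ s, A n ^ 2) * (∑ n ∈ s, B n ^ 2)) :=
        Real.le_sqrt_of_sq_le h1
    _ ≤ Real.sqrt ((∑' n : ℤ, A n ^ 2) * (∑' n : ℤ, B n ^ 2)) := Real.sqrt_le_sqrt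
        (mul_le_mul h2 h3 (Finset.sum_nonneg fun i _ => sq_nonneg _)
          (tsum_nonneg fun i => sq_nonneg _))
    _ = _ := Real.sqrt_mul (tsum_nonneg fun i => sq_nonneg _) _

lemma sqrt_q_add_le (hr0 : 0 < r) {c d : ℤ → ℂ}
    (hc : Summable fun n : ℤ => wgt r n * norm (c n) ^ 2)
    (hd : Summable fun n : ℤ => wgt r n * norm (d n) ^ 2) :
    Real.sqrt (coeffNormSq r (fun n => c n + d n))
      ≤ Real.sqrt (coeffNormSq r c) + Real.sqrt (coeffNormSq r d) := by
  set A : ℤ → ℝ := fun n => swgt r n * norm (c n) with hA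
  set B : ℤ → ℝ := fun n => swgt r n * norm (d n) with hB
  have hA0 : ∀ n, 0 ≤ A n := fun n => mul_nonneg (swgt_pos hr0 n).le (norm_nonneg _)
  have hB0 : ∀ n, 0 ≤ B n := fun n => mul_nonneg (swgt_pos hr0 n).le (norm_nonneg _)
  have hAsq : (fun n : ℤ => A n ^ 2) = fun n : ℤ => wgt r n * norm (c n) ^ 2 := by
    funext n; rw [hA]; simp only; rw [mul_pow, swgt_sq hr0]
  have hBsq : (fun n : ℤ => B n ^ 2) = fun n : ℤ => wgt r n * norm (d n) ^ 2 := by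
    funext n; rw [hB]; simp only; rw [mul_pow, swgt_sq hr0]
  have hAs : Summable fun n : ℤ => A n ^ 2 := by rw [hAsq]; exact hc
  have hBs : Summable fun n : ℤ => B n ^ 2 := by rw [hBsq]; exact hd
  have hABs : Summable fun n : ℤ => A n * B n := by
    apply Summable.of_nonneg_of_le (fun n => mul_nonneg (hA0 n) (hB0 n)) (fun n => ?_)
      ((hAs.add hBs).mul_left (1/2))
    nlinarith [sq_nonneg (A n - B n)]
  set qc := Real.sqrt (coeffNormSq r c) with hqc
  set qd := Real.sqrt (coeffNormSq r d) with hqd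
  have hqc2 : ∑' n : ℤ, A n ^ 2 = qc ^ 2 := by
    rw [hAsq, hqc, Real.sq_sqrt (coeffNormSq_nonneg hr0 c)]; rfl
  have hqd2 : ∑' n : ℤ, B n ^ 2 = qd ^ 2 := by
    rw [hBsq, hqd, Real.sq_sqrt (coeffNormSq_nonneg hr0 d)]; rfl
  have key : coeffNormSq r (fun n => c n + d n) ≤ (qc + qd) ^ 2 := by
    have hterm : ∀ n : ℤ, wgt r n * norm (c n + d n) ^ 2 ≤ (A n + B n) ^ 2 := by
      intro n
      have h1 : norm (c n + d n) ≤ norm (c n) + norm (d n) :=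
        norm_add_le _ _
      have h2 : swgt r n * norm (c n + d n) ≤ A n + B n := by
        rw [hA, hB]; simp only
        calc swgt r n * norm (c n + d n)
            ≤ swgt r n * (norm (c n) + norm (d n)) :=
              mul_le_mul_of_nonneg_left h1 (swgt_pos hr0 n).le
          _ = _ := by ring
      calc wgt r n * norm (c n + d n) ^ 2
          = (swgt r n * norm (c n + d n)) ^ 2 := by rw [mul_pow, swgt_sq hr0]
        _ ≤ (A n + B n) ^ 2 :=
            pow_le_pow_left₀ (mul_nonneg (swgt_pos hr0 n).le (norm_nonneg _)) h2 2
    have hsum2 : Summable fun n : ℤ => (A n + B n) ^ 2 := by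
      have : (fun n : ℤ => (A n + B n) ^ 2)
          = fun n : ℤ => A n ^ 2 + 2 * (A n * B n) + B n ^ 2 := by funext n; ring
      rw [this]
      exact (hAs.add (hABs.mul_left 2)).add hBs
    calc coeffNormSq r (fun n => c n + d n) ≤ ∑' n : ℤ, (A n + B n) ^ 2 := by
          apply Summable.tsum_le_tsum hterm _ hsum2
          apply Summable.of_nonneg_of_le
            (fun n => mul_nonneg (wgt_pos hr0 n).le (by positivity)) hterm hsum2
      _ = (∑' n : ℤ, A n ^ 2) + 2 * (∑' n : ℤ, A n * B n) + ∑' n : ℤ, B n ^ 2 := by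
          have h1 : (fun n : ℤ => (A n + B n) ^ 2)
              = fun n : ℤ => (A n ^ 2 + 2 * (A n * B n)) + B n ^ 2 := by funext n; ring
          rw [h1, Summable.tsum_add (hAs.add (hABs.mul_left 2)) hBs,
            Summable.tsum_add hAs (hABs.mul_left 2), tsum_mul_left]
      _ ≤ qc ^ 2 + 2 * (qc * qd) + qd ^ 2 := by
          have := tsum_cs hA0 hB0 hAs hBs
          rw [hqc2, hqd2]
          have h2 : ∑' n : ℤ, A n * B n ≤ qc * qd := by
            rw [hqc, hqd] at *
            calc ∑' n : ℤ, A n * B n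
                ≤ Real.sqrt (∑' n : ℤ, A n ^ 2) * Real.sqrt (∑' n : ℤ, B n ^ 2) := this
              _ = _ := by rw [hAsq, hBsq]; rfl
          linarith
      _ = (qc + qd) ^ 2 := by ring
  calc Real.sqrt (coeffNormSq r (fun n => c n + d n)) ≤ Real.sqrt ((qc + qd) ^ 2) :=
        Real.sqrt_le_sqrt key
    _ = qc + qd := Real.sqrt_sq (by positivity)

lemma summable_wgt_sum (hr0 : 0 < r) {ι : Type*} (t : Finset ι) (y : ι → ℤ → ℂ)
    (hy : ∀ i ∈ t, Summable fun n : ℤ => wgt r n * norm (y i n) ^ 2) :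
    Summable fun n : ℤ => wgt r n * norm (∑ i ∈ t, y i n) ^ 2 := by
  classical
  induction t using Finset.induction with
  | empty => simp only [Finset.sum_empty]; simpa using summable_zero
  | @insert a s ha ih =>
    have h1 : ∀ n : ℤ, ∑ i ∈ insert a s, y i n = y a n + ∑ i ∈ s, y i n :=
      fun n => Finset.sum_insert ha
    have h2 := summable_wgt_add hr0 (hy a (Finset.mem_insert_self a s))
      (ih (fun i hi => hy i (Finset.mem_insert_of_mem hi)))
    apply h2.congr
    intro n
    rw [h1 n]

lemma sqrt_q_sum_le (hr0 : 0 < r) {ι : Type*} (t : Finset ι) (y : ι → ℤ → ℂ)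
    (hy : ∀ i ∈ t, Summable fun n : ℤ => wgt r n * norm (y i n) ^ 2) :
    Real.sqrt (coeffNormSq r (fun n => ∑ i ∈ t, y i n))
      ≤ ∑ i ∈ t, Real.sqrt (coeffNormSq r (y i)) := by
  classical
  induction t using Finset.induction with
  | empty =>
    simp only [Finset.sum_empty]
    rw [show coeffNormSq r (fun _ : ℤ => (0:ℂ)) = 0 by rw [coeffNormSq]; simp]
    simp
  | @insert a s ha ih =>
    have hya := hy a (Finset.mem_insert_self a s)
    have hys := summable_wgt_sum hr0 s y (fun i hi => hy i (Finset.mem_insert_of_mem hi))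
    have h1 : (fun n : ℤ => ∑ i ∈ insert a s, y i n)
        = fun n : ℤ => y a n + ∑ i ∈ s, y i n := by
      funext n; exact Finset.sum_insert ha
    rw [h1, Finset.sum_insert ha]
    calc Real.sqrt (coeffNormSq r (fun n => y a n + ∑ i ∈ s, y i n))
        ≤ Real.sqrt (coeffNormSq r (y a))
            + Real.sqrt (coeffNormSq r (fun n => ∑ i ∈ s, y i n)) :=
          sqrt_q_add_le hr0 hya hys
      _ ≤ _ := by
          have := ih (fun i hi => hy i (Finset.mem_insert_of_mem hi))
          linarith

lemma q_shift_smul_le (hr0 : 0 < r) (hr1 : r < 1) (b : ℂ) (k : ℤ) {d : ℤ → ℂ}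
    (hd : Summable fun n : ℤ => wgt r n * norm (d n) ^ 2) :
    coeffNormSq r (fun m => b * d (m - k))
      ≤ norm b ^ 2 * r ^ (-(2 * |k|)) * coeffNormSq r d := by
  have hshift : Summable fun n : ℤ => wgt r (n - k) * norm (d (n - k)) ^ 2 := by
    have h := ((Equiv.subRight k).summable_iff
      (f := fun n : ℤ => wgt r n * norm (d n) ^ 2)).mpr hd
    exact h
  have hterm : ∀ n : ℤ, wgt r n * norm (b * d (n - k)) ^ 2
      ≤ norm b ^ 2 * r ^ (-(2 * |k|)) * (wgt r (n - k) * norm (d (n - k)) ^ 2) := by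
    intro n
    have h1 : wgt r n ≤ r ^ (-(2 * |k|)) * wgt r (n - k) := by
      have h := wgt_shift hr0 hr1 (n - k) k
      rwa [sub_add_cancel] at h
    calc wgt r n * norm (b * d (n - k)) ^ 2
        = norm b ^ 2 * (wgt r n * norm (d (n - k)) ^ 2) := by
          rw [norm_mul]; ring
      _ ≤ norm b ^ 2 * ((r ^ (-(2 * |k|)) * wgt r (n - k)) * norm (d (n - k)) ^ 2) := by
          apply mul_le_mul_of_nonneg_left _ (by positivity)
          apply mul_le_mul_of_nonneg_right h1 (by positivity)
      _ = _ := by ring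
  calc coeffNormSq r (fun m => b * d (m - k))
      ≤ ∑' n : ℤ, norm b ^ 2 * r ^ (-(2 * |k|))
          * (wgt r (n - k) * norm (d (n - k)) ^ 2) := by
        have hR : Summable fun n : ℤ => norm b ^ 2 * r ^ (-(2 * |k|))
            * (wgt r (n - k) * norm (d (n - k)) ^ 2) :=
          hshift.mul_left (norm b ^ 2 * r ^ (-(2 * |k|)))
        apply Summable.tsum_le_tsum hterm _ hR
        apply Summable.of_nonneg_of_le
          (fun n => mul_nonneg (wgt_pos hr0 n).le (by positivity)) hterm hR
    _ = norm b ^ 2 * r ^ (-(2 * |k|))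
          * ∑' n : ℤ, wgt r (n - k) * norm (d (n - k)) ^ 2 := by
        rw [← tsum_mul_left]
    _ = norm b ^ 2 * r ^ (-(2 * |k|)) * coeffNormSq r d := by
        congr 1
        rw [coeffNormSq]
        have h := (Equiv.subRight k).tsum_eq
          (f := fun n : ℤ => wgt r n * norm (d n) ^ 2)
        exact h
  
end Annulus
namespace Annulus

variable {r : ℝ}

lemma mem_ne_zero {z : ℂ} (hr0 : 0 < r) (hz : z ∈ ARset r) : z ≠ 0 := by
  intro h
  rw [h] at hz
  have := hz.1
  simp at this
  linarith

def fcoef (l : ℂ) : ℤ → ℂ := fun n => if n = 1 then 1 else if n = 0 then -l else 0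

def gcoef (l : ℂ) : ℤ → ℂ := fun n => if n = 1 then -((starRingEnd ℂ) l) else if n = 0 then 1 else 0

lemma hasCoeff_f (l : ℂ) : HasCoeff r (fun z => z - l) (fcoef l) := by
  constructor
  · apply summable_of_ne_finset_zero (s := ({0, 1} : Finset ℤ))
    intro m hm
    simp only [Finset.mem_insert, Finset.mem_singleton] at hm
    push_neg at hm
    simp [fcoef, hm.1, hm.2]
  · intro z hz
    rw [tsum_eq_sum (s := ({0, 1} : Finset ℤ)) (fun m hm => by
      simp only [Finset.mem_insert, Finset.mem_singleton] at hm
      push_neg at hm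
      simp [fcoef, hm.1, hm.2])]
    rw [Finset.sum_insert (by decide), Finset.sum_singleton]
    simp [fcoef]
    ring

lemma hasCoeff_g (l : ℂ) : HasCoeff r (fun z => 1 - (starRingEnd ℂ) l * z) (gcoef l) := by
  constructor
  · apply summable_of_ne_finset_zero (s := ({0, 1} : Finset ℤ))
    intro m hm
    simp only [Finset.mem_insert, Finset.mem_singleton] at hm
    push_neg at hm
    simp [gcoef, hm.1, hm.2]
  · intro z hz
    rw [tsum_eq_sum (s := ({0, 1} : Finset ℤ)) (fun m hm => by
      simp only [Finset.mem_insert, Finset.mem_singleton] at hm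
      push_neg at hm
      simp [gcoef, hm.1, hm.2])]
    rw [Finset.sum_insert (by decide), Finset.sum_singleton]
    simp [gcoef]
    ring

lemma one_mul_fn (h : ℂ → ℂ) : (fun _ : ℂ => (1:ℂ)) * h = h := by
  funext z; simp [Pi.mul_apply]

lemma isMult_one : IsMult r (fun _ : ℂ => (1:ℂ)) := fun f hf => by rwa [one_mul_fn]

lemma isMult_memH2A {φ : ℂ → ℂ} (hφ : IsMult r φ) : MemH2A r φ := by
  have h := hφ (fun _ => 1) ⟨_, hasCoeff_one⟩
  have he : φ * (fun _ : ℂ => (1:ℂ)) = φ := by funext z; simp [Pi.mul_apply]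
  rwa [he] at h

lemma summable_shift (k : ℤ) {c : ℤ → ℂ} {z : ℂ} (hz0 : z ≠ 0)
    (h : Summable fun n : ℤ => c n * z ^ n) :
    Summable fun n : ℤ => c (n - k) * z ^ n := by
  have h3 : Summable fun n : ℤ => (c n * z ^ n) * z ^ k := h.mul_right (z ^ k)
  have h4 := ((Equiv.subRight k).summable_iff
    (f := fun n : ℤ => (c n * z ^ n) * z ^ k)).mpr h3
  apply h4.congr
  intro n
  show c (n - k) * z ^ (n - k) * z ^ k = c (n - k) * z ^ n
  rw [mul_assoc, ← zpow_add₀ hz0, sub_add_cancel]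

lemma tsum_shift (k : ℤ) (c : ℤ → ℂ) {z : ℂ} (hz0 : z ≠ 0) :
    ∑' n : ℤ, c (n - k) * z ^ n = (∑' n : ℤ, c n * z ^ n) * z ^ k := by
  have h := (Equiv.addRight k).tsum_eq (fun m : ℤ => c (m - k) * z ^ m)
  simp only [Equiv.coe_addRight, add_sub_cancel_right] at h
  rw [← h, ← tsum_mul_right]
  apply tsum_congr; intro n
  rw [zpow_add₀ hz0]; ring

lemma coeff_mul_f (hr0 : 0 < r) (hr1 : r < 1) {φ : ℂ → ℂ} (hφ : IsMult r φ) (l : ℂ) :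
    coeffA r (φ * fun z => z - l)
      = fun n => coeffA r φ (n - 1) - l * coeffA r φ n := by
  have hmem : MemH2A r (φ * fun z => z - l) := hφ _ ⟨_, hasCoeff_f l⟩
  have hφc : HasCoeff r φ (coeffA r φ) := coeffA_spec (isMult_memH2A hφ)
  apply hasCoeff_unique hr0 hr1 (coeffA_spec hmem)
  · intro z hz
    have hz0 := mem_ne_zero hr0 hz
    have h1 : Summable fun n : ℤ => coeffA r φ n * z ^ n := summable_coeff hr0 hφc.1 hz
    have hs1 : Summable fun n : ℤ => coeffA r φ (n - 1) * z ^ n := summable_shift 1 hz0 h1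
    have hs2 : Summable fun n : ℤ => l * (coeffA r φ n * z ^ n) := h1.mul_left l
    apply (hs1.sub hs2).congr
    intro n; ring
  · intro z hz
    have hz0 := mem_ne_zero hr0 hz
    have h1 : Summable fun n : ℤ => coeffA r φ n * z ^ n := summable_coeff hr0 hφc.1 hz
    have hs1 : Summable fun n : ℤ => coeffA r φ (n - 1) * z ^ n := summable_shift 1 hz0 h1
    have e1 : ∀ n : ℤ, (coeffA r φ (n - 1) - l * coeffA r φ n) * z ^ n
        = coeffA r φ (n - 1) * z ^ n - l * (coeffA r φ n * z ^ n) := fun n => by ring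
    rw [Pi.mul_apply, hφc.2 z hz, tsum_congr e1, Summable.tsum_sub hs1 (h1.mul_left l),
      tsum_shift 1 (coeffA r φ) hz0, tsum_mul_left, zpow_one]
    ring

lemma coeff_mul_g (hr0 : 0 < r) (hr1 : r < 1) {φ : ℂ → ℂ} (hφ : IsMult r φ) (l : ℂ) :
    coeffA r (φ * fun z => 1 - (starRingEnd ℂ) l * z)
      = fun n => coeffA r φ n - (starRingEnd ℂ) l * coeffA r φ (n - 1) := by
  have hmem : MemH2A r (φ * fun z => 1 - (starRingEnd ℂ) l * z) := hφ _ ⟨_, hasCoeff_g l⟩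
  have hφc : HasCoeff r φ (coeffA r φ) := coeffA_spec (isMult_memH2A hφ)
  apply hasCoeff_unique hr0 hr1 (coeffA_spec hmem)
  · intro z hz
    have hz0 := mem_ne_zero hr0 hz
    have h1 : Summable fun n : ℤ => coeffA r φ n * z ^ n := summable_coeff hr0 hφc.1 hz
    have hs1 : Summable fun n : ℤ => coeffA r φ (n - 1) * z ^ n := summable_shift 1 hz0 h1
    apply (h1.sub (hs1.mul_left ((starRingEnd ℂ) l))).congr
    intro n; ring
  · intro z hz
    have hz0 := mem_ne_zero hr0 hz
    have h1 : Summable fun n : ℤ => coeffA r φ n * z ^ n := summable_coeff hr0 hφc.1 hz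
    have hs1 : Summable fun n : ℤ => coeffA r φ (n - 1) * z ^ n := summable_shift 1 hz0 h1
    have e1 : ∀ n : ℤ, (coeffA r φ n - (starRingEnd ℂ) l * coeffA r φ (n - 1)) * z ^ n
        = coeffA r φ n * z ^ n - (starRingEnd ℂ) l * (coeffA r φ (n - 1) * z ^ n) :=
      fun n => by ring
    rw [Pi.mul_apply, hφc.2 z hz, tsum_congr e1, Summable.tsum_sub h1 (hs1.mul_left _),
      tsum_mul_left, tsum_shift 1 (coeffA r φ) hz0, zpow_one]
    ring

lemma wgt_zero : wgt r 0 = 1 := by simp [wgt]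

lemma wgt_one : wgt r 1 = 1 := by simp [wgt]

lemma sameP_fg (hr0 : 0 < r) (hr1 : r < 1) (l : ℂ) :
    SameP r (fun z => z - l) (fun z => 1 - (starRingEnd ℂ) l * z) := by
  intro φ hφ
  rw [innerA, innerA, coeff_mul_f hr0 hr1 hφ l, coeff_mul_g hr0 hr1 hφ l,
    coeffA_eq hr0 hr1 (hasCoeff_g l), coeffA_eq hr0 hr1 (hasCoeff_f l)]
  rw [tsum_eq_sum (s := ({0, 1} : Finset ℤ)) (fun m hm => by
    simp only [Finset.mem_insert, Finset.mem_singleton] at hm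
    push_neg at hm
    simp [gcoef, hm.1, hm.2]),
    tsum_eq_sum (s := ({0, 1} : Finset ℤ)) (fun m hm => by
    simp only [Finset.mem_insert, Finset.mem_singleton] at hm
    push_neg at hm
    simp [fcoef, hm.1, hm.2])]
  rw [Finset.sum_insert (by decide), Finset.sum_singleton,
    Finset.sum_insert (by decide), Finset.sum_singleton]
  simp only [fcoef, gcoef, wgt_zero, wgt_one, if_pos rfl]
  norm_num
  ring

end Annulus
namespace Annulus

variable {r : ℝ}

lemma innerA_self (g : ℂ → ℂ) : innerA r g g = ((coeffNormSq r (coeffA r g) : ℝ) : ℂ) := by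
  rw [innerA, coeffNormSq, Complex.ofReal_tsum]
  apply tsum_congr; intro n
  rw [mul_assoc, Complex.mul_conj, Complex.normSq_eq_norm_sq]
  push_cast
  ring

lemma abs_lt_of_normSq_lt {a b : ℂ} (h : Complex.normSq a < Complex.normSq b) :
    norm a < norm b := by
  rw [Complex.norm_def, Complex.norm_def]
  exact Real.sqrt_lt_sqrt (Complex.normSq_nonneg a) h

lemma not_freeOuter (hr0 : 0 < r) (hr1 : r < 1) {l : ℂ} (hl : norm l < 1) :
    ¬ FreeOuter r (fun z => z - l) := by
  rintro ⟨-, hFO⟩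
  set z₀ : ℂ := (((r + 1) / 2 : ℝ) : ℂ) with hz₀def
  have habs0 : norm z₀ = (r + 1) / 2 := by
    rw [hz₀def, Complex.norm_real, Real.norm_eq_abs, abs_of_pos (by linarith)]
  have hz₀ : z₀ ∈ ARset r := by
    constructor <;> rw [habs0] <;> linarith
  have h := hFO z₀ hz₀
  -- the competitor
  set g : ℂ → ℂ := fun z => 1 - (starRingEnd ℂ) l * z with hgdef
  have hmemg : MemH2A r g := ⟨_, hasCoeff_g l⟩
  have hsame : SameP r (fun z => z - l) g := sameP_fg hr0 hr1 l
  -- strict inequality |f z₀| < |g z₀|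
  have hstrict : norm (z₀ - l) < norm (g z₀) := by
    apply abs_lt_of_normSq_lt
    have e : Complex.normSq (1 - (starRingEnd ℂ) l * z₀) - Complex.normSq (z₀ - l)
        = (1 - Complex.normSq l) * (1 - Complex.normSq z₀) := by
      simp only [Complex.normSq_apply, Complex.sub_re, Complex.sub_im, Complex.mul_re,
        Complex.mul_im, Complex.conj_re, Complex.conj_im, Complex.one_re, Complex.one_im]
      ring
    have h1 : Complex.normSq l < 1 := by
      rw [← Complex.sq_norm]
      nlinarith [norm_nonneg l]
    have h2 : Complex.normSq z₀ < 1 := by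
      rw [← Complex.sq_norm, habs0]
      nlinarith
    have h3 : (0:ℝ) < (1 - Complex.normSq l) * (1 - Complex.normSq z₀) := by nlinarith
    rw [hgdef]
    simp only
    linarith
  -- the sSup set
  set S := {t : ℝ | ∃ g', MemH2A r g' ∧ SameP r (fun z => z - l) g'
    ∧ t = norm (g' z₀)} with hS
  have hmemS : norm (g z₀) ∈ S := ⟨g, hmemg, hsame, rfl⟩
  have hbdd : BddAbove S := by
    refine ⟨Real.sqrt (coeffNormSq r (coeffA r (fun z : ℂ => z - l)))
      * ∑' n : ℤ, norm z₀ ^ n / swgt r n, ?_⟩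
    rintro t ⟨g', hmem', hsame', rfl⟩
    have hc' : HasCoeff r g' (coeffA r g') := coeffA_spec hmem'
    have hinner := hsame' (fun _ => 1) isMult_one
    rw [one_mul_fn, one_mul_fn] at hinner
    rw [innerA_self, innerA_self] at hinner
    have hQ : coeffNormSq r (coeffA r g') = coeffNormSq r (coeffA r (fun z : ℂ => z - l)) := by
      exact_mod_cast hinner
    have := point_bound hr0 hc' hz₀
    rw [hQ] at this
    exact this
  have hle : norm (g z₀) ≤ sSup S := le_csSup hbdd hmemS
  rw [← h] at hle
  simp only at hle
  linarith

lemma not_cyclic (hr0 : 0 < r) (hr1 : r < 1) {l : ℂ}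
    (hl1 : r < norm l) (hl2 : norm l < 1) :
    ¬ Cyclic r (fun z => z - l) := by
  rintro ⟨-, hcyc⟩
  have hlA : l ∈ ARset r := ⟨hl1, hl2⟩
  set V := ∑' n : ℤ, norm l ^ n / swgt r n with hV
  have hV1 : (1:ℝ) ≤ V := by
    have hsv := summable_v hr0 hlA
    have h0 := Summable.le_tsum hsv 0 (fun j _ => by
      have := swgt_pos hr0 j
      positivity)
    simp only [zpow_zero] at h0
    rw [hV]
    calc (1:ℝ) = 1 / swgt r 0 := by simp [swgt]
      _ ≤ _ := h0
  have hVpos : (0:ℝ) < V := by linarith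
  obtain ⟨φ, hφ, hlt⟩ := hcyc (fun _ => 1) ⟨_, hasCoeff_one⟩ ((2*V)⁻¹) (by positivity)
  have hmem : MemH2A r (φ * fun z => z - l) := hφ _ ⟨_, hasCoeff_f l⟩
  have hc1 : HasCoeff r (φ * fun z => z - l) (coeffA r (φ * fun z => z - l)) := coeffA_spec hmem
  set F : ℂ → ℂ := (φ * fun z => z - l) - fun _ => (1:ℂ) with hF
  have hsub : HasCoeff r F
      (fun n => coeffA r (φ * fun z => z - l) n - (if n = 0 then 1 else 0)) := by
    have h := hasCoeff_sub hr0 hc1 (hasCoeff_one (r := r))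
    exact h
  have hpoint := point_bound hr0 hsub hlA
  have hval : F l = -1 := by
    rw [hF]
    show (φ * fun z => z - l) l - (1:ℂ) = -1
    rw [Pi.mul_apply]
    simp
  rw [hval] at hpoint
  have hnorm := normA_eq hr0 hr1 hsub
  rw [← hnorm, ← hV] at hpoint
  rw [show norm (-1 : ℂ) = 1 by simp] at hpoint
  have hA0 : 0 ≤ normA r F := by rw [hnorm]; exact Real.sqrt_nonneg _
  have hltF : normA r F < (2*V)⁻¹ := hlt
  have hfinal : (1:ℝ) ≤ (2*V)⁻¹ * V := by
    calc (1:ℝ) ≤ normA r F * V := hpoint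
      _ ≤ (2*V)⁻¹ * V := mul_le_mul_of_nonneg_right (le_of_lt hltF) (le_of_lt hVpos)
  rw [mul_comm, ← div_eq_mul_inv] at hfinal
  rw [show V / (2*V) = 1/2 by field_simp] at hfinal
  linarith

end Annulus
namespace Annulus

variable {r : ℝ}

lemma summable_wgt_shift_smul (hr0 : 0 < r) (hr1 : r < 1) (b : ℂ) (k : ℤ) {d : ℤ → ℂ}
    (hd : Summable fun n : ℤ => wgt r n * norm (d n) ^ 2) :
    Summable fun n : ℤ => wgt r n * norm (b * d (n - k)) ^ 2 := by
  have hshift : Summable fun n : ℤ => wgt r (n - k) * norm (d (n - k)) ^ 2 := by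
    have h := ((Equiv.subRight k).summable_iff
      (f := fun n : ℤ => wgt r n * norm (d n) ^ 2)).mpr hd
    exact h
  apply Summable.of_nonneg_of_le
      (fun n => mul_nonneg (wgt_pos hr0 n).le (by positivity))
      (fun n => ?_)
      (hshift.mul_left (norm b ^ 2 * r ^ (-(2 * |k|))))
  have h1 : wgt r n ≤ r ^ (-(2 * |k|)) * wgt r (n - k) := by
    have h := wgt_shift hr0 hr1 (n - k) k
    rwa [sub_add_cancel] at h
  calc wgt r n * norm (b * d (n - k)) ^ 2
      = norm b ^ 2 * (wgt r n * norm (d (n - k)) ^ 2) := by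
        rw [norm_mul]; ring
    _ ≤ norm b ^ 2 * ((r ^ (-(2 * |k|)) * wgt r (n - k)) * norm (d (n - k)) ^ 2) := by
        apply mul_le_mul_of_nonneg_left _ (by positivity)
        apply mul_le_mul_of_nonneg_right h1 (by positivity)
    _ = norm b ^ 2 * r ^ (-(2 * |k|)) * (wgt r (n - k) * norm (d (n - k)) ^ 2) := by
        ring

lemma laurent_mul_memH2A (hr0 : 0 < r) (hr1 : r < 1) {ι : Type*} (t : Finset ι)
    (coef : ι → ℂ) (e : ι → ℤ) {h : ℂ → ℂ} (hh : MemH2A r h) (F : ℂ → ℂ)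
    (hF : ∀ z ∈ ARset r, F z = (∑ j ∈ t, coef j * z ^ (e j)) * h z) :
    MemH2A r F := by
  classical
  obtain ⟨c, hc⟩ := hh
  refine ⟨fun n => ∑ j ∈ t, coef j * c (n - e j), ?_, ?_⟩
  · apply (summable_wgt_sum hr0 t (fun j n => coef j * c (n - e j))
      (fun j _ => summable_wgt_shift_smul hr0 hr1 (coef j) (e j) hc.1)).congr
    intro n
    rfl
  · intro z hz
    have hz0 := mem_ne_zero hr0 hz
    rw [hF z hz, hc.2 z hz]
    calc (∑ j ∈ t, coef j * z ^ (e j)) * (∑' n : ℤ, c n * z ^ n)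
        = ∑ j ∈ t, coef j * ((∑' n : ℤ, c n * z ^ n) * z ^ (e j)) := by
          rw [Finset.sum_mul]; apply Finset.sum_congr rfl; intro j _; ring
      _ = ∑ j ∈ t, ∑' n : ℤ, coef j * (c (n - e j) * z ^ n) := by
          apply Finset.sum_congr rfl; intro j _
          rw [← tsum_shift (e j) c hz0, ← tsum_mul_left]
      _ = ∑' n : ℤ, ∑ j ∈ t, coef j * (c (n - e j) * z ^ n) :=
          (Summable.tsum_finsetSum (fun j _ =>
            ((summable_shift (e j) hz0 (summable_coeff hr0 hc.1 hz)).mul_left (coef j)))).symm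
      _ = ∑' n : ℤ, (∑ j ∈ t, coef j * c (n - e j)) * z ^ n := by
          apply tsum_congr; intro n
          rw [Finset.sum_mul]; apply Finset.sum_congr rfl; intro j _; ring

lemma telescope (l z : ℂ) (hz0 : z ≠ 0) (N : ℕ) :
    (∑ i ∈ Finset.range (N+1), (((N + 1 - i : ℕ) : ℂ) / ((N:ℂ)+1)) * l ^ i * z ^ (-(i:ℤ)-1))
      * (z - l)
    = 1 - ∑ i ∈ Finset.range (N+1), l ^ (i+1) / ((N:ℂ)+1) * z ^ (-(i:ℤ)-1) := by
  have hN1 : ((N:ℂ) + 1) ≠ 0 := by exact_mod_cast (Nat.cast_add_one_ne_zero N : ((N:ℂ) + 1) ≠ 0)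
  set A : ℕ → ℂ := fun i => ((N + 1 - i : ℕ) : ℂ) / ((N:ℂ)+1) with hA
  set U : ℕ → ℂ := fun i => A i * l ^ i * z ^ (-(i:ℤ)) with hU
  have hsplit : ∀ i ∈ Finset.range (N+1),
      (A i * l ^ i * z ^ (-(i:ℤ)-1)) * (z - l)
      = (U i - U (i+1)) - l ^ (i+1) / ((N:ℂ)+1) * z ^ (-(i:ℤ)-1) := by
    intro i hi
    simp only [Finset.mem_range] at hi
    have hAi : A i = A (i+1) + 1/((N:ℂ)+1) := by
      rw [hA]; simp only
      have hnat : (N + 1 - i : ℕ) = (N + 1 - (i+1)) + 1 := by omega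
      rw [hnat]
      push_cast
      ring
    have hz1 : z ^ (-(i:ℤ)) = z ^ (-(i:ℤ)-1) * z := by
      have h := zpow_add₀ hz0 (-(i:ℤ)-1) 1
      rw [zpow_one] at h
      rw [← h]
      congr 1
      ring
    have e1 : U i = A i * l ^ i * (z ^ (-(i:ℤ)-1) * z) := by
      rw [hU]; simp only
      rw [hz1]
    have e2 : U (i+1) = A (i+1) * l ^ (i+1) * z ^ (-(i:ℤ)-1) := by
      rw [hU]; simp only
      congr 2
      push_cast
      ring
    rw [e1, e2, hAi]
    ring
  calc (∑ i ∈ Finset.range (N+1), A i * l ^ i * z ^ (-(i:ℤ)-1)) * (z - l)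
      = ∑ i ∈ Finset.range (N+1),
          ((U i - U (i+1)) - l ^ (i+1) / ((N:ℂ)+1) * z ^ (-(i:ℤ)-1)) := by
        rw [Finset.sum_mul]; exact Finset.sum_congr rfl hsplit
    _ = (∑ i ∈ Finset.range (N+1), (U i - U (i+1)))
        - ∑ i ∈ Finset.range (N+1), l ^ (i+1) / ((N:ℂ)+1) * z ^ (-(i:ℤ)-1) :=
        Finset.sum_sub_distrib _ _
    _ = (U 0 - U (N+1))
        - ∑ i ∈ Finset.range (N+1), l ^ (i+1) / ((N:ℂ)+1) * z ^ (-(i:ℤ)-1) := by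
        rw [Finset.sum_range_sub' U (N+1)]
    _ = 1 - ∑ i ∈ Finset.range (N+1), l ^ (i+1) / ((N:ℂ)+1) * z ^ (-(i:ℤ)-1) := by
        have hU0 : U 0 = 1 := by
          rw [hU, hA]; simp only
          simp [div_self hN1]
        have hUN : U (N+1) = 0 := by
          rw [hU, hA]; simp only
          simp
        rw [hU0, hUN]; ring

end Annulus
namespace Annulus

variable {r : ℝ}

set_option maxHeartbeats 1000000 in
lemma cyclic_f (hr0 : 0 < r) (hr1 : r < 1) {l : ℂ} (hl : norm l ≤ r) :
    Cyclic r (fun z => z - l) := by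
  classical
  refine ⟨⟨_, hasCoeff_f l⟩, ?_⟩
  intro g hg ε hε
  set δ : ℝ := ε / 3 with hδdef
  have hδ : 0 < δ := by rw [hδdef]; linarith
  set c : ℤ → ℂ := coeffA r g with hcdef
  have hc : HasCoeff r g c := coeffA_spec hg
  -- tail finset
  obtain ⟨s, hs⟩ : ∃ s : Finset ℤ,
      ∑' (n : {m : ℤ // m ∉ s}), (wgt r (n:ℤ) * norm (c (n:ℤ)) ^ 2) < δ^2 := by
    have ht := tendsto_tsum_compl_atTop_zero
      (fun n : ℤ => wgt r n * norm (c n) ^ 2)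
    exact (ht.eventually (gt_mem_nhds (show (0:ℝ) < δ^2 by positivity))).exists
  -- choice of N
  set C : ℝ := ∑ n ∈ s, norm (c n) * Real.sqrt (r ^ (-(2 * |n|))) with hCdef
  have hC0 : 0 ≤ C := Finset.sum_nonneg (fun n _ => by positivity)
  obtain ⟨N, hN⟩ := exists_nat_gt ((C/δ)^2)
  have hCN : C < δ * Real.sqrt ((N:ℝ)+1) := by
    have h1 : C/δ < Real.sqrt ((N:ℝ)+1) := by
      rw [show C/δ = Real.sqrt ((C/δ)^2) from (Real.sqrt_sq (by positivity)).symm]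
      apply Real.sqrt_lt_sqrt (by positivity)
      linarith
    calc C = (C/δ) * δ := by field_simp
      _ < Real.sqrt ((N:ℝ)+1) * δ := mul_lt_mul_of_pos_right h1 hδ
      _ = δ * Real.sqrt ((N:ℝ)+1) := mul_comm _ _
  have hN1C : ((N:ℂ) + 1) ≠ 0 := Nat.cast_add_one_ne_zero N
  -- the E coefficients
  set Ecoef : ℤ → ℂ := fun j => ∑ i ∈ Finset.range (N+1),
    (if j = -(i:ℤ)-1 then l ^ (i+1) / ((N:ℂ)+1) else 0) with hEdef
  have hE0 : ∀ j : ℤ, (∀ i ∈ Finset.range (N+1), j ≠ -(i:ℤ)-1) → Ecoef j = 0 :=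
    fun j hj => Finset.sum_eq_zero (fun i hi => if_neg (hj i hi))
  have hE1 : ∀ i ∈ Finset.range (N+1), Ecoef (-(i:ℤ)-1) = l ^ (i+1) / ((N:ℂ)+1) := by
    intro i hi
    rw [hEdef]
    simp only
    rw [Finset.sum_eq_single i (fun i' _ hne => if_neg (by
      intro heq
      apply hne
      omega)) (fun h => absurd hi h)]
    rw [if_pos rfl]
  have hEfin : ∀ m : ℤ, m ∉ (Finset.range (N+1)).image (fun i : ℕ => -(i:ℤ)-1) →
      Ecoef m = 0 :=
    fun m hm => hE0 m (fun i hi hne => hm (Finset.mem_image.mpr ⟨i, hi, hne.symm⟩))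
  have hE2 : Summable fun j : ℤ => wgt r j * norm (Ecoef j) ^ 2 :=
    summable_of_ne_finset_zero (s := (Finset.range (N+1)).image (fun i : ℕ => -(i:ℤ)-1))
      (fun m hm => by rw [hEfin m hm]; simp)
  -- bound on Q(Ecoef)
  have hQE : coeffNormSq r Ecoef ≤ ((N:ℝ)+1) * (1/((N:ℝ)+1)^2) := by
    have hQEeq : coeffNormSq r Ecoef = ∑ i ∈ Finset.range (N+1),
        wgt r (-(i:ℤ)-1) * norm (Ecoef (-(i:ℤ)-1)) ^ 2 := by
      rw [coeffNormSq, tsum_eq_sum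
        (s := (Finset.range (N+1)).image (fun i : ℕ => -(i:ℤ)-1))
        (fun m hm => by rw [hEfin m hm]; simp),
        Finset.sum_image (fun a _ b _ hab => by omega)]
    rw [hQEeq]
    have hterm : ∀ i ∈ Finset.range (N+1),
        wgt r (-(i:ℤ)-1) * norm (Ecoef (-(i:ℤ)-1)) ^ 2 ≤ 1/((N:ℝ)+1)^2 := by
      intro i hi
      rw [hE1 i hi]
      have hwgt : wgt r (-(i:ℤ)-1) = (r ^ (2*(i+1)) : ℝ)⁻¹ := by
        rw [wgt, if_pos (by omega)]
        rw [show (2 * (-(i:ℤ)-1)) = -((2*(i+1) : ℕ) : ℤ) by push_cast; ring]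
        rw [zpow_neg, zpow_natCast]
      have habsl : norm (l ^ (i+1) / ((N:ℂ)+1))
          = norm l ^ (i+1) / ((N:ℝ)+1) := by
        rw [norm_div, norm_pow]
        congr 1
        rw [show ((N:ℂ)+1) = (((N:ℝ)+1 : ℝ) : ℂ) by push_cast; ring]
        rw [Complex.norm_real, Real.norm_eq_abs, abs_of_pos (by positivity)]
      rw [hwgt, habsl, div_pow]
      have h1 : (norm l ^ (i+1))^2 ≤ r ^ (2*(i+1)) := by
        rw [← pow_mul]
        calc norm l ^ ((i+1)*2) ≤ r ^ ((i+1)*2) :=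
              pow_le_pow_left₀ (norm_nonneg l) hl _
          _ = r ^ (2*(i+1)) := by rw [Nat.mul_comm]
      rw [inv_mul_eq_div, div_div, div_le_div_iff₀ (by positivity) (by positivity)]
      nlinarith [h1, sq_nonneg ((N:ℝ)+1)]
    calc ∑ i ∈ Finset.range (N+1), wgt r (-(i:ℤ)-1) * norm (Ecoef (-(i:ℤ)-1)) ^ 2
        ≤ ∑ _i ∈ Finset.range (N+1), 1/((N:ℝ)+1)^2 := Finset.sum_le_sum hterm
      _ = ((N:ℝ)+1) * (1/((N:ℝ)+1)^2) := by
          rw [Finset.sum_const, Finset.card_range]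
          push_cast
          ring
  have hsqrtQE : Real.sqrt (coeffNormSq r Ecoef) ≤ 1 / Real.sqrt ((N:ℝ)+1) := by
    have h1 : ((N:ℝ)+1) * (1/((N:ℝ)+1)^2) = ((N:ℝ)+1)⁻¹ := by field_simp
    calc Real.sqrt (coeffNormSq r Ecoef) ≤ Real.sqrt (((N:ℝ)+1)⁻¹) := by
          apply Real.sqrt_le_sqrt
          rw [← h1]; exact hQE
      _ = 1 / Real.sqrt ((N:ℝ)+1) := by rw [Real.sqrt_inv, one_div]
  -- the coefficient sequences
  set x : ℤ → ℂ := fun m => if m ∈ s then 0 else -(c m) with hxdef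
  set y : ℤ → ℂ := fun m => ∑ n ∈ s, (-(c n)) * Ecoef (m - n) with hydef
  have hx_s : Summable fun m : ℤ => wgt r m * norm (x m) ^ 2 := by
    apply Summable.of_nonneg_of_le
      (fun m => mul_nonneg (wgt_pos hr0 m).le (by positivity)) (fun m => ?_) hc.1
    rw [hxdef]
    by_cases hm : m ∈ s
    · simp only [hm, if_pos, norm_zero]
      have := mul_nonneg (wgt_pos hr0 m).le (sq_nonneg (norm (c m)))
      simpa using this
    · simp only [hm, if_neg, ite_false, norm_neg]
      exact le_refl _
  have hy_s : Summable fun m : ℤ => wgt r m * norm (y m) ^ 2 := by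
    have h := summable_wgt_sum hr0 s (fun n m => (-(c n)) * Ecoef (m - n))
      (fun n _ => summable_wgt_shift_smul hr0 hr1 (-(c n)) n hE2)
    exact h
  have he_s : Summable fun m : ℤ => wgt r m * norm (x m + y m) ^ 2 :=
    summable_wgt_add hr0 hx_s hy_s
  -- the multiplier
  set φ : ℂ → ℂ := fun z => (∑ n ∈ s, c n * z ^ n)
    * (∑ i ∈ Finset.range (N+1), (((N + 1 - i : ℕ) : ℂ) / ((N:ℂ)+1)) * l ^ i * z ^ (-(i:ℤ)-1))
    with hφdef
  have hφmult : IsMult r φ := by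
    intro h hh
    apply laurent_mul_memH2A hr0 hr1 (s ×ˢ Finset.range (N+1))
      (fun j => c j.1 * ((((N + 1 - j.2 : ℕ) : ℂ) / ((N:ℂ)+1)) * l ^ j.2))
      (fun j => j.1 - (j.2:ℤ) - 1) hh
    intro z hz
    have hz0 := mem_ne_zero hr0 hz
    rw [Pi.mul_apply]
    congr 1
    rw [hφdef]
    simp only
    rw [Finset.sum_mul_sum]
    rw [Finset.sum_product]
    apply Finset.sum_congr rfl; intro n _
    apply Finset.sum_congr rfl; intro i _
    rw [show z ^ ((n:ℤ) - (i:ℤ) - 1) = z ^ (n:ℤ) * z ^ (-(i:ℤ)-1) by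
      rw [← zpow_add₀ hz0]; congr 1; ring]
    ring
  refine ⟨φ, hφmult, ?_⟩
  -- HasCoeff for F
  set F : ℂ → ℂ := (φ * fun z => z - l) - g with hFdef
  have hsub : HasCoeff r F (fun m => x m + y m) := by
    constructor
    · exact he_s
    · intro z hz
      have hz0 := mem_ne_zero hr0 hz
      have hall : Summable fun n : ℤ => c n * z ^ n := summable_coeff hr0 hc.1 hz
      have h1 : Summable fun n : ℤ => (if n ∈ s then c n else 0) * z ^ n :=
        summable_of_ne_finset_zero (s := s) (fun m hm => by rw [if_neg hm, zero_mul])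
      have h2 : Summable fun n : ℤ => (if n ∈ s then 0 else c n) * z ^ n := by
        apply (hall.sub h1).congr
        intro n
        by_cases hn : n ∈ s <;> simp [hn]
      have hp_eq : (∑' n : ℤ, (if n ∈ s then c n else 0) * z ^ n) = ∑ n ∈ s, c n * z ^ n := by
        rw [tsum_eq_sum (s := s) (fun m hm => by rw [if_neg hm, zero_mul])]
        apply Finset.sum_congr rfl
        intro m hm
        rw [if_pos hm]
      have hgz : g z = (∑ n ∈ s, c n * z ^ n)
          + ∑' n : ℤ, (if n ∈ s then 0 else c n) * z ^ n := by
        rw [hc.2 z hz, ← hp_eq, ← Summable.tsum_add h1 h2]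
        apply tsum_congr
        intro n
        by_cases hn : n ∈ s <;> simp [hn]
      have hX : ∑' m : ℤ, x m * z ^ m
          = (∑ n ∈ s, c n * z ^ n) - g z := by
        have hxt : ∀ m : ℤ, x m * z ^ m = -((if m ∈ s then 0 else c m) * z ^ m) := by
          intro m
          rw [hxdef]
          by_cases hm : m ∈ s <;> simp [hm]
        rw [tsum_congr hxt, tsum_neg, hgz]
        ring
      -- E-function facts
      have hEsum : Summable fun j : ℤ => Ecoef j * z ^ j := summable_coeff hr0 hE2 hz
      have hEz : ∑' j : ℤ, Ecoef j * z ^ j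
          = ∑ i ∈ Finset.range (N+1), l ^ (i+1) / ((N:ℂ)+1) * z ^ (-(i:ℤ)-1) := by
        rw [tsum_eq_sum (s := (Finset.range (N+1)).image (fun i : ℕ => -(i:ℤ)-1))
            (fun m hm => by rw [hEfin m hm, zero_mul]),
          Finset.sum_image (fun a _ b _ hab => by omega)]
        apply Finset.sum_congr rfl
        intro i hi
        rw [hE1 i hi]
      have hY : ∑' m : ℤ, y m * z ^ m
          = -((∑ n ∈ s, c n * z ^ n)
            * ∑ i ∈ Finset.range (N+1), l ^ (i+1) / ((N:ℂ)+1) * z ^ (-(i:ℤ)-1)) := by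
        have hyterm : ∀ m : ℤ, y m * z ^ m
            = ∑ n ∈ s, (-(c n)) * (Ecoef (m - n) * z ^ m) := by
          intro m
          rw [hydef]
          simp only
          rw [Finset.sum_mul]
          apply Finset.sum_congr rfl; intro n _; ring
        rw [tsum_congr hyterm,
          Summable.tsum_finsetSum (fun n _ => ((summable_shift n hz0 hEsum).mul_left (-(c n))))]
        have hinner : ∀ n ∈ s, ∑' m : ℤ, (-(c n)) * (Ecoef (m - n) * z ^ m)
            = (-(c n)) * ((∑' j : ℤ, Ecoef j * z ^ j) * z ^ n) := by
          intro n _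
          rw [tsum_mul_left, tsum_shift n Ecoef hz0]
        rw [Finset.sum_congr rfl hinner, hEz, Finset.sum_mul]
        rw [← Finset.sum_neg_distrib]
        apply Finset.sum_congr rfl; intro n _; ring
      have hxs2 : Summable fun m : ℤ => x m * z ^ m := summable_coeff hr0 hx_s hz
      have hys2 : Summable fun m : ℤ => y m * z ^ m := summable_coeff hr0 hy_s hz
      have htel := telescope l z hz0 N
      calc F z = (∑ n ∈ s, c n * z ^ n)
            * ((∑ i ∈ Finset.range (N+1),
                (((N + 1 - i : ℕ) : ℂ) / ((N:ℂ)+1)) * l ^ i * z ^ (-(i:ℤ)-1)) * (z - l))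
            - g z := by
            rw [hFdef]
            show (φ * fun w => w - l) z - g z = _
            rw [Pi.mul_apply, hφdef]
            ring
        _ = (∑ n ∈ s, c n * z ^ n)
            * (1 - ∑ i ∈ Finset.range (N+1), l ^ (i+1) / ((N:ℂ)+1) * z ^ (-(i:ℤ)-1))
            - g z := by rw [htel]
        _ = ((∑ n ∈ s, c n * z ^ n) - g z)
            + (-((∑ n ∈ s, c n * z ^ n)
              * ∑ i ∈ Finset.range (N+1), l ^ (i+1) / ((N:ℂ)+1) * z ^ (-(i:ℤ)-1))) := by
            ring
        _ = ∑' m : ℤ, (x m + y m) * z ^ m := by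
            rw [← hX, ← hY, ← Summable.tsum_add hxs2 hys2]
            apply tsum_congr; intro m; ring
  -- norm estimate
  have hnorm := normA_eq hr0 hr1 hsub
  have hQxval : coeffNormSq r x < δ^2 := by
    have heq : coeffNormSq r x
        = ∑' (n : {m : ℤ | m ∉ s}), (wgt r (n:ℤ) * norm (c (n:ℤ)) ^ 2) := by
      refine (tsum_congr ?_).trans (tsum_subtype {m : ℤ | m ∉ s}
        (fun m => wgt r m * norm (c m) ^ 2)).symm
      intro m
      by_cases hm : m ∈ s
      · rw [Set.indicator_of_notMem (by simpa using hm), hxdef]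
        simp [hm]
      · rw [Set.indicator_of_mem (by simpa using hm), hxdef]
        simp [hm]
    rw [heq]
    exact hs
  have hQxlt : Real.sqrt (coeffNormSq r x) < δ := by
    calc Real.sqrt (coeffNormSq r x) < Real.sqrt (δ^2) :=
          Real.sqrt_lt_sqrt (coeffNormSq_nonneg hr0 x) hQxval
      _ = δ := Real.sqrt_sq hδ.le
  have hQy : Real.sqrt (coeffNormSq r y) ≤ C * (1 / Real.sqrt ((N:ℝ)+1)) := by
    have h1 : Real.sqrt (coeffNormSq r y)
        ≤ ∑ n ∈ s, Real.sqrt (coeffNormSq r (fun m => (-(c n)) * Ecoef (m - n))) := by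
      have h := sqrt_q_sum_le hr0 s (fun n m => (-(c n)) * Ecoef (m - n))
        (fun n _ => summable_wgt_shift_smul hr0 hr1 (-(c n)) n hE2)
      exact h
    have h2 : ∀ n ∈ s, Real.sqrt (coeffNormSq r (fun m => (-(c n)) * Ecoef (m - n)))
        ≤ norm (c n) * Real.sqrt (r ^ (-(2 * |n|)))
          * Real.sqrt (coeffNormSq r Ecoef) := by
      intro n _
      have h3 := q_shift_smul_le hr0 hr1 (-(c n)) n hE2
      calc Real.sqrt (coeffNormSq r (fun m => (-(c n)) * Ecoef (m - n)))
          ≤ Real.sqrt (norm (-(c n)) ^ 2 * r ^ (-(2 * |n|)) * coeffNormSq r Ecoef) :=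
            Real.sqrt_le_sqrt h3
        _ = norm (c n) * Real.sqrt (r ^ (-(2 * |n|)))
            * Real.sqrt (coeffNormSq r Ecoef) := by
            rw [Real.sqrt_mul (by positivity), Real.sqrt_mul (by positivity),
              Real.sqrt_sq (norm_nonneg _), norm_neg]
    calc Real.sqrt (coeffNormSq r y)
        ≤ ∑ n ∈ s, norm (c n) * Real.sqrt (r ^ (-(2 * |n|)))
            * Real.sqrt (coeffNormSq r Ecoef) := le_trans h1 (Finset.sum_le_sum h2)
      _ = C * Real.sqrt (coeffNormSq r Ecoef) := by rw [hCdef, Finset.sum_mul]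
      _ ≤ C * (1 / Real.sqrt ((N:ℝ)+1)) := mul_le_mul_of_nonneg_left hsqrtQE hC0
  have hsqrtN : (0:ℝ) < Real.sqrt ((N:ℝ)+1) := Real.sqrt_pos.mpr (by positivity)
  have hCd : C * (1 / Real.sqrt ((N:ℝ)+1)) < δ := by
    rw [mul_one_div, div_lt_iff₀ hsqrtN]
    linarith
  have htri : Real.sqrt (coeffNormSq r (fun m => x m + y m))
      ≤ Real.sqrt (coeffNormSq r x) + Real.sqrt (coeffNormSq r y) :=
    sqrt_q_add_le hr0 hx_s hy_s
  calc normA r F = Real.sqrt (coeffNormSq r (fun m => x m + y m)) := hnorm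
    _ ≤ Real.sqrt (coeffNormSq r x) + Real.sqrt (coeffNormSq r y) := htri
    _ < δ + δ := by
        apply add_lt_add_of_lt_of_le hQxlt (le_trans hQy hCd.le)
    _ < ε := by rw [hδdef]; linarith

end Annulus
open Annulus in
/-- If `r < |λ| < 1` then `z - λ` is not cyclic (hence not free outer)
in `ℋ²(A_r)`; if `|λ| ≤ r` then `z - λ` is cyclic but not free outer. -/
theorem statement16 (r : ℝ) (hr0 : 0 < r) (hr1 : r < 1) (l : ℂ) :
    (r < ‖l‖ → ‖l‖ < 1 →
      ¬ Cyclic r (fun z => z - l) ∧ ¬ FreeOuter r (fun z => z - l)) ∧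
    (‖l‖ ≤ r →
      Cyclic r (fun z => z - l) ∧ ¬ FreeOuter r (fun z => z - l)) := by
  constructor
  · intro h1 h2
    exact ⟨Annulus.not_cyclic hr0 hr1 h1 h2, Annulus.not_freeOuter hr0 hr1 h2⟩
  · intro h
    exact ⟨Annulus.cyclic_f hr0 hr1 h, Annulus.not_freeOuter hr0 hr1 (lt_of_le_of_lt h hr1)⟩
end
end

section
/- Fix r with 0<r<1 and define u:A_r→ℂ² by u(z)=(z/√(r²+1), r/(√(r²+1)·z)). Then ‖u(z)‖_{ℂ²}<1 for every z∈A_r, and for all λ,μ∈A_r one has k_r(λ,μ) = ((1−r²)/(1+r²)) · 1/(1−⟨u(λ),u(μ)⟩_{ℂ²}), where ⟨u(λ),u(μ)⟩_{ℂ²}=u₁(λ)·conj(u₁(μ))+u₂(λ)·conj(u₂(μ)). -/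
noncomputable section

open Annulus in
/-- The map `u(z) = (z/√(r²+1), r/(√(r²+1) z))` sends `A_r` into `𝔹₂`, and
`k_r(λ,μ) = ((1-r²)/(1+r²)) · 1/(1 - ⟨u(λ), u(μ)⟩)` for all `λ, μ ∈ A_r`. -/
theorem statement17 (r : ℝ) (hr0 : 0 < r) (hr1 : r < 1) :
    (∀ z ∈ ARset r,
      ‖z / (Real.sqrt (r ^ 2 + 1) : ℂ)‖ ^ 2 +
        ‖(r : ℂ) / ((Real.sqrt (r ^ 2 + 1) : ℂ) * z)‖ ^ 2 < 1) ∧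
    (∀ l ∈ ARset r, ∀ m ∈ ARset r,
      ((1 - r ^ 2 : ℝ) : ℂ) /
          ((1 - l * (starRingEnd ℂ) m) * (1 - (r : ℂ) ^ 2 / (l * (starRingEnd ℂ) m))) =
        (((1 - r ^ 2) / (1 + r ^ 2) : ℝ) : ℂ) *
          (1 / (1 -
            ((l / (Real.sqrt (r ^ 2 + 1) : ℂ)) *
                (starRingEnd ℂ) (m / (Real.sqrt (r ^ 2 + 1) : ℂ)) +
              ((r : ℂ) / ((Real.sqrt (r ^ 2 + 1) : ℂ) * l)) *
                (starRingEnd ℂ) ((r : ℂ) / ((Real.sqrt (r ^ 2 + 1) : ℂ) * m)))))) := by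
  have h1 : (0:ℝ) < r ^ 2 + 1 := by positivity
  have hsq : Real.sqrt (r ^ 2 + 1) ^ 2 = r ^ 2 + 1 := Real.sq_sqrt h1.le
  have hs0 : ((Real.sqrt (r ^ 2 + 1) : ℝ) : ℂ) ≠ 0 := by
    simp only [ne_eq, Complex.ofReal_eq_zero]
    positivity
  have hs2 : ((Real.sqrt (r ^ 2 + 1) : ℝ) : ℂ) ^ 2 = (r : ℂ) ^ 2 + 1 := by
    rw [← Complex.ofReal_pow, hsq]; push_cast; ring
  constructor
  · intro z hz
    obtain ⟨hz1, hz2⟩ := hz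
    have ht0 : 0 < ‖z‖ := lt_trans hr0 hz1
    set t := ‖z‖ with ht
    rw [norm_div, norm_div, norm_mul, Complex.norm_of_nonneg (Real.sqrt_nonneg _),
      Complex.norm_of_nonneg hr0.le, div_pow, div_pow,
      mul_pow, hsq]
    rw [div_add_div _ _ (by positivity) (by positivity), div_lt_one (by positivity)]
    nlinarith [mul_pos (show (0:ℝ) < t ^ 2 - r ^ 2 by nlinarith) (show (0:ℝ) < 1 - t ^ 2 by nlinarith), sq_nonneg t, h1]
  · intro l hl m hm
    obtain ⟨hl1, hl2⟩ := hl
    obtain ⟨hm1, hm2⟩ := hm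
    have hl0 : l ≠ 0 := by
      intro h; rw [h] at hl1; simp at hl1; linarith
    have hm0 : m ≠ 0 := by
      intro h; rw [h] at hm1; simp at hm1; linarith
    have hcm0 : (starRingEnd ℂ) m ≠ 0 := by simpa using hm0
    set s : ℂ := ((Real.sqrt (r ^ 2 + 1) : ℝ) : ℂ) with hsdef
    set w : ℂ := l * (starRingEnd ℂ) m with hwdef
    have hw0 : w ≠ 0 := mul_ne_zero hl0 hcm0
    have hwabs : ‖w‖ = ‖l‖ * ‖m‖ := by
      rw [hwdef, norm_mul, Complex.norm_conj]
    have hw1 : w ≠ 1 := by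
      intro h
      have : ‖w‖ < 1 := by
        rw [hwabs]
        nlinarith [norm_nonneg l, norm_nonneg m]
      rw [h] at this; simp at this
    have hwr : w ≠ (r : ℂ) ^ 2 := by
      intro h
      have : r ^ 2 < ‖w‖ := by
        rw [hwabs]
        nlinarith [norm_nonneg l, norm_nonneg m]
      rw [h] at this
      rw [norm_pow, Complex.norm_of_nonneg hr0.le] at this
      exact lt_irrefl _ this
    have h1w : (1 : ℂ) - w ≠ 0 := sub_ne_zero.mpr (Ne.symm hw1)
    have hwr2 : w - (r : ℂ) ^ 2 ≠ 0 := sub_ne_zero.mpr hwr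
    have hX : 1 - ((l / s) * (starRingEnd ℂ) (m / s) +
        ((r : ℂ) / (s * l)) * (starRingEnd ℂ) ((r : ℂ) / (s * m))) =
        (1 - w) * (w - (r : ℂ) ^ 2) / (s ^ 2 * w) := by
      simp only [map_div₀, map_mul, Complex.conj_ofReal, hsdef]
      rw [hwdef]
      have ha : ((Real.sqrt (r ^ 2 + 1) : ℝ) : ℂ) ^ 2 = (r : ℂ) ^ 2 + 1 := hs2
      have hs0' : ((Real.sqrt (r ^ 2 + 1) : ℝ) : ℂ) ≠ 0 := hs0
      field_simp
      linear_combination l * (starRingEnd ℂ) m * ha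
    rw [hX]
    have hden : (1 - w) * (w - (r : ℂ) ^ 2) / (s ^ 2 * w) ≠ 0 :=
      div_ne_zero (mul_ne_zero h1w hwr2) (mul_ne_zero (pow_ne_zero 2 hs0) hw0)
    have hr2c : (1 : ℂ) + (r : ℂ) ^ 2 ≠ 0 := by
      have : ((1 + r ^ 2 : ℝ) : ℂ) ≠ 0 := by
        simp only [ne_eq, Complex.ofReal_eq_zero]; positivity
      push_cast at this; exact this
    rw [one_div, inv_div]
    push_cast
    field_simp
    linear_combination ((r : ℂ) ^ 2 - 1) * hs2
end
end

section
/- Fix r with 0<r<1 and let φ be a holomorphic function on the unit disk 𝔻 with |φ(z)|≤1 for all z∈𝔻. Then the kernel (λ,μ) ↦ (1−φ(λ)·conj(φ(μ)))·k_r(λ,μ) is positive semidefinite on A_r×A_r. -/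
noncomputable section

section Statement18Aux

open Complex Metric intervalIntegral Real

lemma cs_aux {i nf ng : ℝ} (hi : 0 ≤ i) (hnf : 0 ≤ nf) (hng : 0 ≤ ng)
    (h : ∀ a : ℝ, 0 < a → 2 * i ≤ a * nf + ng / a) : i ^ 2 ≤ nf * ng := by
  rcases eq_or_lt_of_le hi with hi0 | hi0
  · nlinarith
  rcases eq_or_lt_of_le hnf with h0 | h0
  · have := h (ng / i + 1) (by positivity)
    rw [← h0] at this
    have e1 : i * (ng / i) = ng := by field_simp
    have h2 : ng / (ng / i + 1) ≤ i := by
      rw [div_le_iff₀ (by positivity)]; nlinarith [div_nonneg hng hi]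
    nlinarith
  rcases eq_or_lt_of_le hng with g0 | g0
  · have := h (i / nf) (by positivity)
    have e1 : i / nf * nf = i := by field_simp
    rw [← g0] at this
    simp [e1] at this
    nlinarith
  · have := h (Real.sqrt ng / Real.sqrt nf) (by positivity)
    have e1 : Real.sqrt nf * Real.sqrt nf = nf := Real.mul_self_sqrt hnf
    have e2 : Real.sqrt ng * Real.sqrt ng = ng := Real.mul_self_sqrt hng
    have hsf : 0 < Real.sqrt nf := Real.sqrt_pos.2 h0
    have hsg : 0 < Real.sqrt ng := Real.sqrt_pos.2 g0
    have e3 : Real.sqrt ng / Real.sqrt nf * nf = Real.sqrt ng * Real.sqrt nf := by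
      field_simp; nlinarith
    have e4 : ng / (Real.sqrt ng / Real.sqrt nf) = Real.sqrt ng * Real.sqrt nf := by
      rw [div_div_eq_mul_div, div_eq_iff (ne_of_gt hsg)]; nlinarith
    rw [e3, e4] at this
    nlinarith

lemma integral_cs {f g : ℝ → ℂ} (hf : Continuous f) (hg : Continuous g) :
    ‖∫ θ in (0:ℝ)..(2*π), f θ * (starRingEnd ℂ) (g θ)‖ ^ 2 ≤
      (∫ θ in (0:ℝ)..(2*π), Complex.normSq (f θ)) *
      (∫ θ in (0:ℝ)..(2*π), Complex.normSq (g θ)) := by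
  have hT : (0:ℝ) ≤ 2 * π := by positivity
  set Nf := ∫ θ in (0:ℝ)..(2*π), Complex.normSq (f θ) with hNfdef
  set Ng := ∫ θ in (0:ℝ)..(2*π), Complex.normSq (g θ) with hNgdef
  have hNf : 0 ≤ Nf := intervalIntegral.integral_nonneg hT (fun θ _ => normSq_nonneg _)
  have hNg : 0 ≤ Ng := intervalIntegral.integral_nonneg hT (fun θ _ => normSq_nonneg _)
  apply cs_aux (norm_nonneg _) hNf hNg
  intro a ha
  have h1 : ‖∫ θ in (0:ℝ)..(2*π), f θ * (starRingEnd ℂ) (g θ)‖ ≤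
      ∫ θ in (0:ℝ)..(2*π), ‖f θ * (starRingEnd ℂ) (g θ)‖ :=
    intervalIntegral.norm_integral_le_integral_norm hT
  have h2 : (∫ θ in (0:ℝ)..(2*π), ‖f θ * (starRingEnd ℂ) (g θ)‖) ≤
      ∫ θ in (0:ℝ)..(2*π), (a * Complex.normSq (f θ) + Complex.normSq (g θ) / a) / 2 := by
    apply intervalIntegral.integral_mono_on hT
    · exact ((hf.mul (Complex.continuous_conj.comp hg)).norm).intervalIntegrable _ _
    · exact (((continuous_const.mul (Complex.continuous_normSq.comp hf)).add
        ((Complex.continuous_normSq.comp hg).div_const a)).div_const 2).intervalIntegrable _ _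
    · intro θ _
      have e1 : ‖f θ * (starRingEnd ℂ) (g θ)‖ = ‖f θ‖ * ‖g θ‖ := by
        rw [norm_mul, RCLike.norm_conj]
      have e2 : Complex.normSq (f θ) = ‖f θ‖ ^ 2 := by
        rw [Complex.normSq_eq_norm_sq]
      have e3 : Complex.normSq (g θ) = ‖g θ‖ ^ 2 := by
        rw [Complex.normSq_eq_norm_sq]
      rw [e1, e2, e3, le_div_iff₀ (by norm_num : (0:ℝ) < 2), ← sub_nonneg]
      have key : a * ‖f θ‖ ^ 2 + ‖g θ‖ ^ 2 / a - ‖f θ‖ * ‖g θ‖ * 2 =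
          (a * ‖f θ‖ - ‖g θ‖) ^ 2 / a := by field_simp; ring
      rw [key]; positivity
  have h3 : (∫ θ in (0:ℝ)..(2*π), (a * Complex.normSq (f θ) + Complex.normSq (g θ) / a) / 2)
      = (a * Nf + Ng / a) / 2 := by
    rw [intervalIntegral.integral_div]
    congr 1
    have i1 : IntervalIntegrable (fun θ => a * Complex.normSq (f θ))
        MeasureTheory.volume 0 (2*π) := (Continuous.intervalIntegrable (by continuity) _ _)
    have i2 : IntervalIntegrable (fun θ => Complex.normSq (g θ) / a)
        MeasureTheory.volume 0 (2*π) := (Continuous.intervalIntegrable (by continuity) _ _)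
    rw [intervalIntegral.integral_add i1 i2,
      intervalIntegral.integral_const_mul, intervalIntegral.integral_div]
  linarith

lemma reproducing {R : ℝ} (hR : 1 < R) {f : ℂ → ℂ} (hf : DifferentiableOn ℂ f (ball 0 R))
    {μ : ℂ} (hμ : ‖μ‖ < 1) :
    (∫ θ in (0:ℝ)..(2*π), f (circleMap 0 1 θ) *
        (starRingEnd ℂ) ((1 - (starRingEnd ℂ) μ * circleMap 0 1 θ)⁻¹))
      = 2 * π * f μ := by
  have hsub : closedBall (0:ℂ) 1 ⊆ ball (0:ℂ) R := closedBall_subset_ball hR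
  have hd : DiffContOnCl ℂ f (ball (0:ℂ) 1) := by
    apply DifferentiableOn.diffContOnCl
    rw [closure_ball (0:ℂ) one_ne_zero]
    exact hf.mono hsub
  have hμb : μ ∈ ball (0:ℂ) 1 := by simpa [mem_ball, dist_eq_norm] using hμ
  have key := hd.circleIntegral_sub_inv_smul hμb
  have h1 : ∀ θ : ℝ, f (circleMap 0 1 θ) *
      (starRingEnd ℂ) ((1 - (starRingEnd ℂ) μ * circleMap 0 1 θ)⁻¹)
      = I⁻¹ * (deriv (circleMap 0 1) θ •
          ((circleMap 0 1 θ - μ)⁻¹ • f (circleMap 0 1 θ))) := by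
    intro θ
    set e := circleMap 0 1 θ with he_def
    have he : ‖e‖ = 1 := by simp [he_def, norm_circleMap_zero]
    have he0 : e ≠ 0 := by
      intro h; rw [h] at he; simp at he
    have hem : e - μ ≠ 0 := by
      intro h
      rw [sub_eq_zero.mp h] at he
      exact ne_of_lt hμ he
    have hconj : (starRingEnd ℂ) e = e⁻¹ := by
      apply eq_inv_of_mul_eq_one_left
      rw [mul_comm, Complex.mul_conj]
      norm_cast
      rw [Complex.normSq_eq_norm_sq, he]; norm_num
    have hne : 1 - μ * e⁻¹ ≠ 0 := by
      intro h
      have h2 : μ * e⁻¹ = 1 := by linear_combination -h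
      have h3 : ‖μ * e⁻¹‖ = ‖μ‖ := by
        rw [norm_mul, norm_inv, he]; simp
      rw [h2, norm_one] at h3
      linarith
    rw [deriv_circleMap, ← he_def, smul_eq_mul, smul_eq_mul,
      map_inv₀, map_sub, map_one, map_mul, Complex.conj_conj, hconj]
    field_simp
  rw [intervalIntegral.integral_congr (g := fun θ => I⁻¹ * (deriv (circleMap 0 1) θ •
      ((circleMap 0 1 θ - μ)⁻¹ • f (circleMap 0 1 θ)))) (fun θ _ => h1 θ),
    intervalIntegral.integral_const_mul]
  rw [show (∫ θ in (0:ℝ)..(2*π), deriv (circleMap 0 1) θ •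
      ((circleMap 0 1 θ - μ)⁻¹ • f (circleMap 0 1 θ)))
      = (∮ z in C(0, 1), (z - μ)⁻¹ • f z) from rfl, key]
  rw [smul_eq_mul]
  field_simp [Complex.I_ne_zero]

lemma one_sub_ne_zero {q : ℂ} (hq : ‖q‖ < 1) : (1:ℂ) - q ≠ 0 := by
  intro h
  have : q = 1 := by linear_combination -h
  rw [this] at hq; simp at hq

lemma pick_psd {n : ℕ} {R : ℝ} (hR : 1 < R) {ψ : ℂ → ℂ}
    (hψd : DifferentiableOn ℂ ψ (ball 0 R))
    (hψb : ∀ w : ℂ, ‖w‖ = 1 → ‖ψ w‖ ≤ 1)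
    (ζ : Fin n → ℂ) (hζ : ∀ i, ‖ζ i‖ < 1) (x : Fin n → ℂ) :
    ∃ t : ℝ, 0 ≤ t ∧
      ∑ i, ∑ j, (starRingEnd ℂ) (x i) * x j *
        (1 - ψ (ζ i) * (starRingEnd ℂ) (ψ (ζ j))) *
        (1 - ζ i * (starRingEnd ℂ) (ζ j))⁻¹ = ((t : ℝ) : ℂ) := by
  classical
  -- choose a radius R₀ ∈ (1, R] with ‖ζ i‖ * R₀ < 1 for all i
  obtain ⟨R₀, hR₀1, hR₀R, hζR₀⟩ : ∃ R₀:ℝ, 1 < R₀ ∧ R₀ ≤ R ∧ ∀ i, ‖ζ i‖ * R₀ < 1 := by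
    set m : NNReal := Finset.univ.sup fun i => ‖ζ i‖₊ with hm_def
    have hmi : ∀ i, ‖ζ i‖ ≤ (m:ℝ) := fun i => by
      exact_mod_cast Finset.le_sup (f := fun i => ‖ζ i‖₊) (Finset.mem_univ i)
    have hm1 : (m:ℝ) < 1 := by
      have : m < (1:NNReal) := by
        rw [hm_def, Finset.sup_lt_iff (by norm_num : (⊥:NNReal) < 1)]
        intro i _
        have := hζ i
        rw [← coe_nnnorm] at this
        exact_mod_cast this
      exact_mod_cast this
    refine ⟨min R (2 / (1 + m)), lt_min hR ?_, min_le_left _ _, ?_⟩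
    · rw [lt_div_iff₀ (by positivity)]
      linarith
    · intro i
      have h1 : ‖ζ i‖ * min R (2 / (1 + m)) ≤ (m:ℝ) * (2 / (1 + m)) := by
        apply mul_le_mul (hmi i) (min_le_right _ _) (by positivity) (by positivity)
      have h2 : (m:ℝ) * (2 / (1 + m)) < 1 := by
        rw [← mul_div_assoc, div_lt_one (by positivity : (0:ℝ) < 1 + (m:ℝ))]
        linarith
      linarith
  -- basic objects
  have hcmem : ∀ θ : ℝ, circleMap 0 1 θ ∈ ball (0:ℂ) R₀ := by
    intro θ
    rw [mem_ball_zero_iff, norm_circleMap_zero]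
    simpa using hR₀1
  have hFc : ∀ {F : ℂ → ℂ}, DifferentiableOn ℂ F (ball 0 R₀) →
      Continuous fun θ => F (circleMap 0 1 θ) := by
    intro F hF
    exact hF.continuousOn.comp_continuous (continuous_circleMap 0 1) hcmem
  have hkd : ∀ i, DifferentiableOn ℂ
      (fun w => (1 - (starRingEnd ℂ) (ζ i) * w)⁻¹) (ball 0 R₀) := by
    intro i
    apply DifferentiableOn.inv
    · exact (differentiableOn_const _).sub ((differentiable_id.const_mul _).differentiableOn)
    · intro w hw
      apply one_sub_ne_zero
      rw [norm_mul, RCLike.norm_conj]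
      calc ‖ζ i‖ * ‖w‖ ≤ ‖ζ i‖ * R₀ :=
            mul_le_mul_of_nonneg_left (le_of_lt (mem_ball_zero_iff.mp hw)) (norm_nonneg _)
        _ < 1 := hζR₀ i
  have hhd : DifferentiableOn ℂ
      (fun w => ∑ j, x j * (1 - (starRingEnd ℂ) (ζ j) * w)⁻¹) (ball 0 R₀) := by
    apply DifferentiableOn.fun_sum
    intro j _
    exact (hkd j).const_mul _
  have hud : DifferentiableOn ℂ
      (fun w => ∑ j, x j * (starRingEnd ℂ) (ψ (ζ j)) *
        (1 - (starRingEnd ℂ) (ζ j) * w)⁻¹) (ball 0 R₀) := by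
    apply DifferentiableOn.fun_sum
    intro j _
    exact (hkd j).const_mul _
  have hvd : DifferentiableOn ℂ
      (fun w => ψ w * ∑ j, x j * (starRingEnd ℂ) (ψ (ζ j)) *
        (1 - (starRingEnd ℂ) (ζ j) * w)⁻¹) (ball 0 R₀) := by
    exact (hψd.mono (ball_subset_ball hR₀R)).mul hud
  -- the master reproducing identity for linear combinations of kernels
  have Ifg : ∀ (F : ℂ → ℂ), DifferentiableOn ℂ F (ball 0 R₀) → ∀ (a : Fin n → ℂ),
      (∫ θ in (0:ℝ)..(2*π), F (circleMap 0 1 θ) * (starRingEnd ℂ)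
          (∑ j, a j * (1 - (starRingEnd ℂ) (ζ j) * circleMap 0 1 θ)⁻¹))
        = ∑ j, (starRingEnd ℂ) (a j) * (2 * π * F (ζ j)) := by
    intro F hF a
    have hpt : ∀ θ:ℝ, F (circleMap 0 1 θ) * (starRingEnd ℂ)
          (∑ j, a j * (1 - (starRingEnd ℂ) (ζ j) * circleMap 0 1 θ)⁻¹)
        = ∑ j, (starRingEnd ℂ) (a j) * (F (circleMap 0 1 θ) *
            (starRingEnd ℂ) ((1 - (starRingEnd ℂ) (ζ j) * circleMap 0 1 θ)⁻¹)) := by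
      intro θ
      rw [map_sum, Finset.mul_sum]
      apply Finset.sum_congr rfl
      intro j _
      rw [map_mul]
      ring
    simp only [hpt]
    rw [intervalIntegral.integral_finset_sum]
    · apply Finset.sum_congr rfl
      intro j _
      rw [intervalIntegral.integral_const_mul, reproducing hR₀1 hF (hζ j)]
    · intro j _
      apply Continuous.intervalIntegrable
      exact continuous_const.mul ((hFc hF).mul
        (Complex.continuous_conj.comp (hFc (hkd j))))
  have hT : (0:ℝ) ≤ 2 * π := by positivity
  -- h-quantities
  have h1 := Ifg (fun w => ∑ i, x i * (1 - (starRingEnd ℂ) (ζ i) * w)⁻¹) hhd x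
  beta_reduce at h1
  simp only [Complex.mul_conj] at h1
  rw [intervalIntegral.integral_ofReal] at h1
  set Nh := ∫ θ in (0:ℝ)..(2*π),
      normSq (∑ j, x j * (1 - (starRingEnd ℂ) (ζ j) * circleMap 0 1 θ)⁻¹) with hNh_def
  -- u-quantities
  have h2 := Ifg (fun w => ∑ i, x i * (starRingEnd ℂ) (ψ (ζ i)) *
      (1 - (starRingEnd ℂ) (ζ i) * w)⁻¹) hud (fun j => x j * (starRingEnd ℂ) (ψ (ζ j)))
  beta_reduce at h2
  simp only [Complex.mul_conj] at h2
  rw [intervalIntegral.integral_ofReal] at h2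
  set Nu := ∫ θ in (0:ℝ)..(2*π),
      normSq (∑ j, x j * (starRingEnd ℂ) (ψ (ζ j)) *
        (1 - (starRingEnd ℂ) (ζ j) * circleMap 0 1 θ)⁻¹) with hNu_def
  -- v-quantity
  have h3 := Ifg (fun w => ψ w * ∑ i, x i * (starRingEnd ℂ) (ψ (ζ i)) *
      (1 - (starRingEnd ℂ) (ζ i) * w)⁻¹) hvd x
  beta_reduce at h3
  -- ⟨u,u⟩ = ⟨ψu, h⟩
  have hQeq : ((Nu:ℝ):ℂ) = ∫ θ in (0:ℝ)..(2*π),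
      (ψ (circleMap 0 1 θ) * ∑ i, x i * (starRingEnd ℂ) (ψ (ζ i)) *
        (1 - (starRingEnd ℂ) (ζ i) * circleMap 0 1 θ)⁻¹) *
      (starRingEnd ℂ) (∑ j, x j * (1 - (starRingEnd ℂ) (ζ j) * circleMap 0 1 θ)⁻¹) := by
    rw [h3, h2]
    apply Finset.sum_congr rfl
    intro j _
    simp only [map_mul, Complex.conj_conj]
    ring
  -- Cauchy–Schwarz
  have hcont_v : Continuous fun θ => ψ (circleMap 0 1 θ) *
      ∑ i, x i * (starRingEnd ℂ) (ψ (ζ i)) *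
        (1 - (starRingEnd ℂ) (ζ i) * circleMap 0 1 θ)⁻¹ := hFc hvd
  have hcont_h : Continuous fun θ => ∑ j, x j *
      (1 - (starRingEnd ℂ) (ζ j) * circleMap 0 1 θ)⁻¹ := hFc hhd
  have hcont_u : Continuous fun θ => ∑ j, x j * (starRingEnd ℂ) (ψ (ζ j)) *
      (1 - (starRingEnd ℂ) (ζ j) * circleMap 0 1 θ)⁻¹ := hFc hud
  have cs := integral_cs hcont_v hcont_h
  beta_reduce at cs
  -- contractivity : Nv ≤ Nu
  have hNv_le : (∫ θ in (0:ℝ)..(2*π), normSq (ψ (circleMap 0 1 θ) *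
      ∑ i, x i * (starRingEnd ℂ) (ψ (ζ i)) *
        (1 - (starRingEnd ℂ) (ζ i) * circleMap 0 1 θ)⁻¹)) ≤ Nu := by
    rw [hNu_def]
    apply intervalIntegral.integral_mono_on hT
    · exact ((Complex.continuous_normSq.comp hcont_v)).intervalIntegrable _ _
    · exact ((Complex.continuous_normSq.comp hcont_u)).intervalIntegrable _ _
    · intro θ _
      rw [Complex.normSq_mul]
      apply mul_le_of_le_one_left (normSq_nonneg _)
      rw [Complex.normSq_eq_norm_sq]
      have hcirc1 : ‖circleMap 0 1 θ‖ = 1 := by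
        rw [norm_circleMap_zero]; norm_num
      exact pow_le_one₀ (norm_nonneg _) (hψb _ hcirc1)
  have hNu0 : (0:ℝ) ≤ Nu := by
    rw [hNu_def]
    exact intervalIntegral.integral_nonneg hT (fun θ _ => normSq_nonneg _)
  have hNh0 : (0:ℝ) ≤ Nh := by
    rw [hNh_def]
    exact intervalIntegral.integral_nonneg hT (fun θ _ => normSq_nonneg _)
  have hnorm : ‖((Nu:ℝ):ℂ)‖ = Nu := by
    rw [Complex.norm_real, Real.norm_of_nonneg hNu0]
  have hNuNh : Nu ≤ Nh := by
    rw [← hQeq, hnorm] at cs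
    have key : Nu ^ 2 ≤ Nu * Nh := le_trans cs
      (mul_le_mul_of_nonneg_right hNv_le hNh0)
    rcases eq_or_lt_of_le hNu0 with h0 | h0
    · linarith
    · nlinarith
  -- conclusion
  refine ⟨(Nh - Nu)/(2*π), div_nonneg (by linarith) (by positivity), ?_⟩
  apply mul_left_cancel₀ (show (((2*π:ℝ)):ℂ) ≠ 0 by
    simp [Complex.ofReal_ne_zero])
  have hS1 : (((2*π:ℝ)):ℂ) * (∑ i, ∑ j, (starRingEnd ℂ) (x i) * x j *
      (1 - ζ i * (starRingEnd ℂ) (ζ j))⁻¹) = ((Nh:ℝ):ℂ) := by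
    have h1c := congrArg (starRingEnd ℂ) h1
    simp only [map_sum, map_mul, map_inv₀, map_sub, map_one, Complex.conj_conj,
      Complex.conj_ofReal, map_ofNat] at h1c
    rw [h1c]
    push_cast
    simp only [Finset.mul_sum]
    rw [Finset.sum_comm]
    apply Finset.sum_congr rfl; intro j _
    apply Finset.sum_congr rfl; intro i _
    ring
  have hS2 : (((2*π:ℝ)):ℂ) * (∑ i, ∑ j, (starRingEnd ℂ) (x i) * x j *
      (ψ (ζ i) * (starRingEnd ℂ) (ψ (ζ j))) *
      (1 - ζ i * (starRingEnd ℂ) (ζ j))⁻¹) = ((Nu:ℝ):ℂ) := by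
    have h2c := congrArg (starRingEnd ℂ) h2
    simp only [map_sum, map_mul, map_inv₀, map_sub, map_one, Complex.conj_conj,
      Complex.conj_ofReal, map_ofNat] at h2c
    rw [h2c]
    push_cast
    simp only [Finset.mul_sum]
    rw [Finset.sum_comm]
    apply Finset.sum_congr rfl; intro j _
    apply Finset.sum_congr rfl; intro i _
    ring
  have expand : ∑ i, ∑ j, (starRingEnd ℂ) (x i) * x j *
      (1 - ψ (ζ i) * (starRingEnd ℂ) (ψ (ζ j))) *
      (1 - ζ i * (starRingEnd ℂ) (ζ j))⁻¹
      = (∑ i, ∑ j, (starRingEnd ℂ) (x i) * x j *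
          (1 - ζ i * (starRingEnd ℂ) (ζ j))⁻¹)
        - (∑ i, ∑ j, (starRingEnd ℂ) (x i) * x j *
          (ψ (ζ i) * (starRingEnd ℂ) (ψ (ζ j))) *
          (1 - ζ i * (starRingEnd ℂ) (ζ j))⁻¹) := by
    rw [← Finset.sum_sub_distrib]
    apply Finset.sum_congr rfl; intro i _
    rw [← Finset.sum_sub_distrib]
    apply Finset.sum_congr rfl; intro j _
    ring
  rw [expand, mul_sub, hS1, hS2]
  rw [← Complex.ofReal_mul, mul_div_cancel₀ _ (by positivity : (2*π:ℝ) ≠ 0),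
    Complex.ofReal_sub]

lemma pick_psd_limit {n : ℕ} {φ : ℂ → ℂ}
    (hφd : DifferentiableOn ℂ φ (Metric.ball (0 : ℂ) 1))
    (hφb : ∀ w ∈ Metric.ball (0 : ℂ) 1, ‖φ w‖ ≤ 1)
    (z : Fin n → ℂ) (hz1 : ∀ i, ‖z i‖ < 1)
    (y : Fin n → ℂ) :
    ∃ t : ℝ, 0 ≤ t ∧
      ∑ i, ∑ j, (starRingEnd ℂ) (y i) * y j *
        (1 - φ (z i) * (starRingEnd ℂ) (φ (z j))) *
        (1 - z i * (starRingEnd ℂ) (z j))⁻¹ = ((t:ℝ):ℂ) := by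
  classical
  set S := ∑ i, ∑ j, (starRingEnd ℂ) (y i) * y j *
      (1 - φ (z i) * (starRingEnd ℂ) (φ (z j))) *
      (1 - z i * (starRingEnd ℂ) (z j))⁻¹ with hS_def
  -- Hermitian symmetry of S
  have hsym : (starRingEnd ℂ) S = S := by
    rw [hS_def]
    simp only [map_sum, map_mul, map_inv₀, map_sub, map_one, Complex.conj_conj]
    rw [Finset.sum_comm]
    apply Finset.sum_congr rfl; intro i _
    apply Finset.sum_congr rfl; intro j _
    ring
  -- the s-dependent form
  set F : ℝ → ℂ := fun s => ∑ i, ∑ j, (starRingEnd ℂ) (y i) * y j *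
      (1 - φ (z i) * (starRingEnd ℂ) (φ (z j))) *
      (1 - z i * (starRingEnd ℂ) (z j) / ((s:ℂ))^2)⁻¹ with hF_def
  -- bound on the points
  set A : ℝ := ((Finset.univ.sup fun i => ‖z i‖₊ : NNReal) : ℝ) ⊔ 2⁻¹ with hA_def
  have hA0 : (0:ℝ) < A := lt_of_lt_of_le (by norm_num) le_sup_right
  have hAi : ∀ i, ‖z i‖ ≤ A := by
    intro i
    refine le_trans ?_ le_sup_left
    rw [← coe_nnnorm]
    exact_mod_cast Finset.le_sup (f := fun i => ‖z i‖₊) (Finset.mem_univ i)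
  have hA1 : A < 1 := by
    apply sup_lt_iff.mpr
    constructor
    · have : (Finset.univ.sup fun i => ‖z i‖₊) < (1:NNReal) := by
        rw [Finset.sup_lt_iff (by norm_num : (⊥:NNReal) < 1)]
        intro i _
        have := hz1 i
        rw [← coe_nnnorm] at this
        exact_mod_cast this
      exact_mod_cast this
    · norm_num
  -- positivity of re (F s) for s ∈ Ioo A 1
  have hFs : ∀ s : ℝ, s ∈ Set.Ioo A 1 → ∃ t : ℝ, 0 ≤ t ∧ F s = ((t:ℝ):ℂ) := by
    intro s hs
    have hs0 : (0:ℝ) < s := lt_trans hA0 hs.1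
    have hsC : ((s:ℝ):ℂ) ≠ 0 := Complex.ofReal_ne_zero.mpr (ne_of_gt hs0)
    have hR : (1:ℝ) < 1/s := by
      rw [lt_div_iff₀ hs0]; simpa using hs.2
    have hψd : DifferentiableOn ℂ (fun w => φ (((s:ℝ):ℂ) * w)) (ball 0 (1/s)) := by
      apply DifferentiableOn.comp hφd
        ((differentiable_id.const_mul _).differentiableOn)
      intro w hw
      rw [mem_ball_zero_iff] at hw ⊢
      rw [norm_mul, Complex.norm_real, Real.norm_of_nonneg (le_of_lt hs0)]
      calc s * ‖w‖ < s * (1/s) := by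
            exact mul_lt_mul_of_pos_left hw hs0
        _ = 1 := by field_simp
    have hψb : ∀ w : ℂ, ‖w‖ = 1 → ‖φ (((s:ℝ):ℂ) * w)‖ ≤ 1 := by
      intro w hw
      apply hφb
      rw [mem_ball_zero_iff, norm_mul, Complex.norm_real,
        Real.norm_of_nonneg (le_of_lt hs0), hw, mul_one]
      exact hs.2
    have hζ : ∀ i, ‖z i / ((s:ℝ):ℂ)‖ < 1 := by
      intro i
      rw [norm_div, Complex.norm_real, Real.norm_of_nonneg (le_of_lt hs0),
        div_lt_one hs0]
      exact lt_of_le_of_lt (hAi i) hs.1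
    obtain ⟨t, ht0, ht⟩ := pick_psd hR hψd hψb (fun i => z i / ((s:ℝ):ℂ)) hζ y
    refine ⟨t, ht0, ?_⟩
    rw [← ht, hF_def]
    apply Finset.sum_congr rfl; intro i _
    apply Finset.sum_congr rfl; intro j _
    have e1 : ((s:ℝ):ℂ) * (z i / ((s:ℝ):ℂ)) = z i := by field_simp
    have e2 : ((s:ℝ):ℂ) * (z j / ((s:ℝ):ℂ)) = z j := by field_simp
    rw [e1, e2]
    congr 1
    congr 1
    rw [map_div₀, Complex.conj_ofReal]
    field_simp
  -- continuity of F at 1 from the left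
  have hcont : Filter.Tendsto F (nhdsWithin 1 (Set.Iio 1)) (nhds (F 1)) := by
    have : Filter.Tendsto F (nhds 1) (nhds (F 1)) := by
      rw [hF_def]
      apply tendsto_finset_sum
      intro i _
      apply tendsto_finset_sum
      intro j _
      apply Filter.Tendsto.const_mul
      apply Filter.Tendsto.inv₀
      · apply Filter.Tendsto.const_sub
        apply Filter.Tendsto.div tendsto_const_nhds
        · exact ((Complex.continuous_ofReal.tendsto 1).pow 2)
        · norm_num
      · intro hcontra
        have h1 : ‖((1:ℝ):ℂ)‖^2 = 1 := by norm_num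
        have : z i * (starRingEnd ℂ) (z j) / ((1:ℝ):ℂ)^2 = 1 := by
          linear_combination -hcontra
        have habs := congrArg norm this
        simp only [norm_div, norm_mul, RCLike.norm_conj, norm_pow, Complex.norm_real,
          norm_one, one_pow, div_one] at habs
        nlinarith [hz1 i, hz1 j, norm_nonneg (z i), norm_nonneg (z j)]
    exact this.mono_left nhdsWithin_le_nhds
  have hF1 : F 1 = S := by
    rw [hF_def, hS_def]
    apply Finset.sum_congr rfl; intro i _
    apply Finset.sum_congr rfl; intro j _
    norm_num
  have hre : 0 ≤ (F 1).re := by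
    have htend : Filter.Tendsto (fun s => (F s).re) (nhdsWithin 1 (Set.Iio 1))
        (nhds ((F 1).re)) := (Complex.continuous_re.tendsto _).comp hcont
    apply ge_of_tendsto htend
    filter_upwards [Ioo_mem_nhdsLT hA1] with s hs
    obtain ⟨t, ht0, hts⟩ := hFs s hs
    rw [hts]
    simpa using ht0
  refine ⟨S.re, ?_, ?_⟩
  · rw [← hF1] at hsym ⊢
    exact hre
  · exact (Complex.conj_eq_iff_re.mp hsym).symm

end Statement18Aux

open Annulus in
open scoped ComplexOrder in
/-- If `φ` is holomorphic on `𝔻` with `|φ| ≤ 1`, then the kernel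
`(1 - φ(λ) conj(φ(μ))) k_r(λ, μ)` is positive semidefinite on `A_r × A_r`. -/
theorem statement18 (r : ℝ) (hr0 : 0 < r) (hr1 : r < 1)
    (φ : ℂ → ℂ) (hφd : DifferentiableOn ℂ φ (Metric.ball (0 : ℂ) 1))
    (hφb : ∀ z ∈ Metric.ball (0 : ℂ) 1, ‖φ z‖ ≤ 1) :
    ∀ (n : ℕ) (z : Fin n → ℂ), (∀ i, z i ∈ ARset r) →
      Matrix.PosSemidef (Matrix.of fun i j : Fin n =>
        (1 - φ (z i) * (starRingEnd ℂ) (φ (z j))) *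
          (((1 - r ^ 2 : ℝ) : ℂ) /
            ((1 - z i * (starRingEnd ℂ) (z j)) *
              (1 - (r : ℂ) ^ 2 / (z i * (starRingEnd ℂ) (z j)))))) := by
  intro n z hz
  have hz1 : ∀ i, ‖z i‖ < 1 := fun i => (hz i).2
  have hzr : ∀ i, r < ‖z i‖ := fun i => (hz i).1
  have hz0 : ∀ i, z i ≠ 0 := by
    intro i h
    have := hzr i
    rw [h] at this
    simp at this
    linarith
  have hzz0 : ∀ i j, z i * (starRingEnd ℂ) (z j) ≠ 0 := fun i j =>
    mul_ne_zero (hz0 i) (star_ne_zero.mpr (hz0 j))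
  have hzz1 : ∀ i j, ‖z i * (starRingEnd ℂ) (z j)‖ < 1 := by
    intro i j
    rw [norm_mul, RCLike.norm_conj]
    nlinarith [hz1 i, hz1 j, norm_nonneg (z i), norm_nonneg (z j)]
  have hξ : ∀ i j, ‖(r:ℂ)^2 / (z i * (starRingEnd ℂ) (z j))‖ < 1 := by
    intro i j
    rw [norm_div, norm_mul, RCLike.norm_conj, norm_pow, Complex.norm_real,
      Real.norm_of_nonneg (le_of_lt hr0)]
    rw [div_lt_one (by nlinarith [hzr i, hzr j])]
    nlinarith [hzr i, hzr j]
  rw [Matrix.posSemidef_iff_dotProduct_mulVec]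
  constructor
  · -- Hermitian
    ext i j
    simp only [Matrix.conjTranspose_apply, Matrix.of_apply, Complex.star_def, map_mul,
      map_sub, map_one, map_div₀, map_pow, Complex.conj_conj, Complex.conj_ofReal]
    ring
  · intro x
    set g : ℕ → Fin n × Fin n → ℂ := fun m p =>
      (starRingEnd ℂ) (x p.1) * x p.2 * (1 - φ (z p.1) * (starRingEnd ℂ) (φ (z p.2))) *
        (1 - z p.1 * (starRingEnd ℂ) (z p.2))⁻¹ * (((1 - r ^ 2 : ℝ)):ℂ) *
        ((r:ℂ)^2 / (z p.1 * (starRingEnd ℂ) (z p.2)))^m with hg_def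
    have hsum_each : ∀ p : Fin n × Fin n, Summable (fun m => g m p) := by
      intro p
      exact (summable_geometric_of_norm_lt_one (hξ p.1 p.2)).mul_left _
    have hquad : dotProduct (star x) (Matrix.mulVec (Matrix.of fun i j : Fin n =>
        (1 - φ (z i) * (starRingEnd ℂ) (φ (z j))) *
          (((1 - r ^ 2 : ℝ) : ℂ) /
            ((1 - z i * (starRingEnd ℂ) (z j)) *
              (1 - (r : ℂ) ^ 2 / (z i * (starRingEnd ℂ) (z j)))))) x)
        = ∑ p : Fin n × Fin n, ∑' m, g m p := by
      rw [Fintype.sum_prod_type]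
      simp only [dotProduct, Matrix.mulVec, Matrix.of_apply, Pi.star_apply,
        Complex.star_def, Finset.mul_sum]
      apply Finset.sum_congr rfl; intro i _
      apply Finset.sum_congr rfl; intro j _
      have htsum : ∑' m, g m (i, j) =
          ((starRingEnd ℂ) (x i) * x j * (1 - φ (z i) * (starRingEnd ℂ) (φ (z j))) *
            (1 - z i * (starRingEnd ℂ) (z j))⁻¹ * (((1 - r ^ 2 : ℝ)):ℂ)) *
          (1 - (r:ℂ)^2 / (z i * (starRingEnd ℂ) (z j)))⁻¹ := by
        rw [hg_def]
        rw [tsum_mul_left, tsum_geometric_of_norm_lt_one (hξ i j)]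
      rw [htsum]
      have hne1 : (1 : ℂ) - z i * (starRingEnd ℂ) (z j) ≠ 0 := one_sub_ne_zero (hzz1 i j)
      have hne2 : (1 : ℂ) - (r:ℂ)^2 / (z i * (starRingEnd ℂ) (z j)) ≠ 0 :=
        one_sub_ne_zero (hξ i j)
      field_simp
    have hswap : ∑ p : Fin n × Fin n, ∑' m, g m p = ∑' m, ∑ p : Fin n × Fin n, g m p :=
      (Summable.tsum_finsetSum (fun p _ => hsum_each p)).symm
    set y : ℕ → Fin n → ℂ := fun m i => x i * (starRingEnd ℂ) ((z i)⁻¹ ^ m) with hy_def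
    have hpick : ∀ m : ℕ, ∃ t:ℝ, 0 ≤ t ∧
        ∑ i, ∑ j, (starRingEnd ℂ) (y m i) * y m j *
          (1 - φ (z i) * (starRingEnd ℂ) (φ (z j))) *
          (1 - z i * (starRingEnd ℂ) (z j))⁻¹ = ((t:ℝ):ℂ) :=
      fun m => pick_psd_limit hφd hφb z hz1 (y m)
    choose t ht0 hteq using hpick
    have hterm : ∀ m : ℕ, (∑ p : Fin n × Fin n, g m p)
        = (((1 - r^2) * r^(2*m) * t m : ℝ) : ℂ) := by
      intro m
      rw [Fintype.sum_prod_type]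
      push_cast
      rw [← hteq m]
      simp only [Finset.mul_sum]
      apply Finset.sum_congr rfl; intro i _
      apply Finset.sum_congr rfl; intro j _
      rw [hg_def, hy_def]
      simp only [map_mul, Complex.conj_conj, map_pow, map_inv₀]
      rw [div_pow, ← pow_mul, mul_pow]
      have hzi : (z i) ≠ 0 := hz0 i
      have hzj : (starRingEnd ℂ) (z j) ≠ 0 := star_ne_zero.mpr (hz0 j)
      push_cast
      ring
    rw [hquad, hswap]
    have : ∑' m, ∑ p : Fin n × Fin n, g m p
        = ((∑' m, ((1 - r^2) * r^(2*m) * t m) : ℝ) : ℂ) := by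
      rw [Complex.ofReal_tsum]
      exact tsum_congr hterm
    rw [this]
    rw [Complex.zero_le_real]
    apply tsum_nonneg
    intro m
    have h1 : (0:ℝ) ≤ 1 - r^2 := by nlinarith
    have h2 : (0:ℝ) ≤ r^(2*m) := pow_nonneg (le_of_lt hr0) _
    exact mul_nonneg (mul_nonneg h1 h2) (ht0 m)
end
end
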